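/- arXiv:1310.0655 — 6 statements merged into one kernel-verified Lean document; each statement's English description precedes it below -/
import Mathlib

section
/- Let X = (X_1, ..., X_N) be a vector of N mutually independent random variables, let f(X) be a square-integrable R^n-valued random vector, and let (f_J(X_J))_{J subset of {1,...,N}} be its ANOVA decomposition, i.e., each f_J(X_J) is sigma(X_J)-measurable and square-integrable with E(f_J(X_J) | X_{~i}) = 0 for every i in J, and f(X) = sum over J of f_J(X_J) almost surely. Then for any two distinct subsets J and K of {1,...,N} and any coordinate indices l, m in {1,...,n}, the l-th coordinate of f_J(X_J) and the m-th coordinate of f_K(X_K) are orthogonal in L^2, i.e., E[f_{J,l}(X_J) f_{K,m}(X_K)] = 0. -/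
open MeasureTheory ProbabilityTheory

/-- `F` is an ANOVA decomposition of `fX` with respect to the random variables `X i`:
each component `F J` is (a.e.) measurable with respect to the σ-algebra generated by the
subvector `X_J`, is square-integrable, has vanishing conditional expectation given `X_{~i}`
for every `i ∈ J`, and the components sum to `fX` almost surely. -/
def IsANOVADecomp {Ω : Type*} [MeasurableSpace Ω] (μ : Measure Ω)
    {N n : ℕ} {𝒳 : Fin N → Type*} [∀ i, MeasurableSpace (𝒳 i)]
    (X : ∀ i, Ω → 𝒳 i) (fX : Ω → EuclideanSpace ℝ (Fin n))
    (F : Finset (Fin N) → Ω → EuclideanSpace ℝ (Fin n)) : Prop :=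
  (∀ J : Finset (Fin N),
      AEStronglyMeasurable[⨆ i ∈ J, MeasurableSpace.comap (X i) inferInstance] (F J) μ)
  ∧ (∀ J : Finset (Fin N), MemLp (F J) 2 μ)
  ∧ (∀ J : Finset (Fin N), ∀ i ∈ J,
      μ[F J | ⨆ (j : Fin N) (_ : j ≠ i), MeasurableSpace.comap (X j) inferInstance] =ᵐ[μ] 0)
  ∧ fX =ᵐ[μ] fun ω => ∑ J : Finset (Fin N), F J ω



private theorem anova_aux {Ω : Type*} {n : ℕ} (m' : MeasurableSpace Ω)
    {mΩ : MeasurableSpace Ω} (μ : Measure Ω) [IsProbabilityMeasure μ]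
    (hm : m' ≤ mΩ) (G H : Ω → EuclideanSpace ℝ (Fin n))
    (hG2 : MemLp G 2 μ) (hH2 : MemLp H 2 μ)
    (hHmeas : AEStronglyMeasurable[m'] H μ)
    (hcond : μ[G|m'] =ᵐ[μ] 0) (l m : Fin n) :
    ∫ ω, G ω l * H ω m ∂μ = 0 := by
  haveI : SigmaFinite (μ.trim hm) := inferInstance
  set g : Ω → ℝ := fun ω => G ω l with hgdef
  set h : Ω → ℝ := fun ω => H ω m with hhdef
  have hg2 : MemLp g 2 μ := by
    exact (EuclideanSpace.proj (𝕜 := ℝ) l).comp_memLp' hG2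
  have hh2 : MemLp h 2 μ := by
    exact (EuclideanSpace.proj (𝕜 := ℝ) m).comp_memLp' hH2
  have hGint : Integrable G μ := hG2.integrable one_le_two
  have hgint : Integrable g μ := hg2.integrable one_le_two
  have hhm : AEStronglyMeasurable[m'] h μ := by
    obtain ⟨F', hF'm, hF'e⟩ := hHmeas
    refine ⟨fun ω => F' ω m, ?_, hF'e.mono fun ω hω => by rw [hhdef]; simp [hω]⟩
    exact (EuclideanSpace.proj (𝕜 := ℝ) m).continuous.comp_stronglyMeasurable hF'm
  -- the conditional expectation of g given m' vanishes
  have hzero : (0 : Ω → ℝ) =ᵐ[μ] μ[g|m'] := by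
    refine ae_eq_condExp_of_forall_setIntegral_eq hm hgint
      (fun s _ _ => (integrable_zero Ω ℝ μ).integrableOn)
      (fun s hs hμs => ?_)
      (StronglyMeasurable.aestronglyMeasurable stronglyMeasurable_const)
    simp only [Pi.zero_apply, integral_zero]
    have h1 : ∫ x in s, G x ∂μ = 0 := by
      rw [← setIntegral_condExp hm hGint hs]
      rw [integral_congr_ae (ae_restrict_of_ae hcond)]
      simp
    have hcom := (EuclideanSpace.proj (𝕜 := ℝ) l).integral_comp_comm (hGint.integrableOn (s := s))
    rw [h1, map_zero] at hcom
    rw [hgdef]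
    exact hcom.symm
  -- integrability of the product
  have hmul : Integrable (h * g) μ := by
    refine memLp_one_iff_integrable.mp ?_
    have : MemLp (h • g) 1 μ := hg2.smul hh2 (hpqr := ⟨by rw [inv_one, ENNReal.inv_two_add_inv_two]⟩)
    simpa [smul_eq_mul] using this
  -- pull-out property
  have hpull : μ[h * g|m'] =ᵐ[μ] h * μ[g|m'] :=
    condExp_mul_of_aestronglyMeasurable_left hhm hmul hgint
  have hres : μ[h * g|m'] =ᵐ[μ] 0 := by
    refine hpull.trans ?_
    filter_upwards [hzero] with ω hω
    simp [Pi.mul_apply, ← hω]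
  calc ∫ ω, G ω l * H ω m ∂μ = ∫ ω, (h * g) ω ∂μ := by
        simp [hgdef, hhdef, mul_comm]
    _ = ∫ ω, (μ[h * g|m']) ω ∂μ := (integral_condExp hm).symm
    _ = 0 := by rw [integral_congr_ae hres]; simp

/-- Distinct components of the ANOVA decomposition are orthogonal in `L²`, coordinatewise:
for `J ≠ K` and any coordinates `l, m`, `E[f_{J,l}(X_J) · f_{K,m}(X_K)] = 0`. -/
theorem anova_components_orthogonal
    {Ω : Type*} [MeasurableSpace Ω] (μ : Measure Ω) [IsProbabilityMeasure μ]
    {N n : ℕ} {𝒳 : Fin N → Type*} [∀ i, MeasurableSpace (𝒳 i)]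
    (X : ∀ i, Ω → 𝒳 i) (hX : ∀ i, Measurable (X i))
    (hindep : iIndepFun X μ)
    (f : (∀ i, 𝒳 i) → EuclideanSpace ℝ (Fin n)) (hf : Measurable f)
    (hf2 : MemLp (fun ω => f (fun i => X i ω)) 2 μ)
    (F : Finset (Fin N) → Ω → EuclideanSpace ℝ (Fin n))
    (hF : IsANOVADecomp μ X (fun ω => f (fun i => X i ω)) F) :
    ∀ J K : Finset (Fin N), J ≠ K → ∀ l m : Fin n,
      ∫ ω, F J ω l * F K ω m ∂μ = 0 := by
  obtain ⟨hmeas, h2, hcond, -⟩ := hF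
  have key : ∀ J K : Finset (Fin N), ∀ i : Fin N, i ∈ J → i ∉ K → ∀ l m : Fin n,
      ∫ ω, F J ω l * F K ω m ∂μ = 0 := by
    intro J K i hiJ hiK l m
    have hm : (⨆ (j : Fin N) (_ : j ≠ i), MeasurableSpace.comap (X j) inferInstance) ≤ _ :=
      iSup_le fun j => iSup_le fun _ => (hX j).comap_le
    have hKm : (⨆ j ∈ K, MeasurableSpace.comap (X j) inferInstance) ≤
        ⨆ (j : Fin N) (_ : j ≠ i), MeasurableSpace.comap (X j) inferInstance := by
      refine iSup_le fun j => iSup_le fun hj => ?_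
      exact le_iSup₂ (f := fun (j : Fin N) (_ : j ≠ i) =>
        MeasurableSpace.comap (X j) inferInstance) j (fun hji => hiK (hji ▸ hj))
    exact anova_aux _ μ hm (F J) (F K) (h2 J) (h2 K) ((hmeas K).mono hKm)
      (hcond J i hiJ) l m
  intro J K hJK l m
  by_cases hsub : J ⊆ K
  · obtain ⟨i, hiK, hiJ⟩ :=
      Finset.not_subset.mp (fun h => hJK (Finset.Subset.antisymm hsub h))
    rw [← key K J i hiK hiJ m l]
    exact integral_congr_ae (Filter.Eventually.of_forall fun ω => mul_comm _ _)
  · obtain ⟨i, hiJ, hiK⟩ := Finset.not_subset.mp hsub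
    exact key J K i hiJ hiK l m
end

section
/- Let X = (X_1, ..., X_N) be a vector of N mutually independent random variables, let f(X) be a square-integrable R^n-valued random vector, and let (f_J(X_J))_{J subset of {1,...,N}} be its ANOVA decomposition. Then the generalized variance of f(X) decomposes as a sum over all subsets: Var(f(X)) = sum over all J subset of {1,...,N} of Var(f_J(X_J)), where Var(Z) = E[|Z - E(Z)|^2] with |.| the Euclidean norm on R^n. -/
open MeasureTheory ProbabilityTheory

/-- The generalized variance `Var(Z) = E[‖Z - E Z‖²]` (Euclidean norm on `ℝⁿ`). -/
noncomputable def gVar {Ω : Type*} [MeasurableSpace Ω] {n : ℕ}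
    (μ : Measure Ω) (Z : Ω → EuclideanSpace ℝ (Fin n)) : ℝ :=
  ∫ ω, ‖Z ω - ∫ ω', Z ω' ∂μ‖ ^ 2 ∂μ

open scoped RealInnerProductSpace

section AuxLemmas

variable {Ω : Type*} {E : Type*} [NormedAddCommGroup E] [InnerProductSpace ℝ E]
  [CompleteSpace E]

omit [CompleteSpace E] in
lemma memLp_two_integrable_inner {m0 : MeasurableSpace Ω} {μ : Measure Ω}
    {f g : Ω → E} (hf : MemLp f 2 μ) (hg : MemLp g 2 μ) :
    Integrable (fun ω => ⟪f ω, g ω⟫) μ := by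
  have h := L2.integrable_inner (𝕜 := ℝ) (hf.toLp f) (hg.toLp g)
  refine h.congr ?_
  filter_upwards [hf.coeFn_toLp, hg.coeFn_toLp] with ω h1 h2
  rw [h1, h2]

lemma integral_inner_eq_zero_of_condexp_eq_zero
    {m m0 : MeasurableSpace Ω} {μ : Measure Ω} [IsProbabilityMeasure μ]
    (hm : m ≤ m0)
    {f g : Ω → E} (hf : MemLp f 2 μ) (hg : MemLp g 2 μ)
    (hgm : AEStronglyMeasurable[m] g μ)
    (hcond : μ[f|m] =ᵐ[μ] 0) :
    ∫ ω, ⟪f ω, g ω⟫ ∂μ = 0 := by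
  set F := hf.toLp f with hFdef
  set G := hg.toLp g with hGdef
  have hFf : F =ᵐ[μ] f := hf.coeFn_toLp
  have hGg : G =ᵐ[μ] g := hg.coeFn_toLp
  have hGm : AEStronglyMeasurable[m] (G : Ω → E) μ := hgm.congr hGg.symm
  have hceq : (condExpL2 E ℝ hm F : Ω → E) =ᵐ[μ] μ[f|m] := by
    refine ae_eq_condExp_of_forall_setIntegral_eq hm (hf.integrable one_le_two)
      (fun s hs hμs => integrableOn_condExpL2_of_measure_ne_top hm hμs.ne F)
      (fun s hs hμs => ?_) (aestronglyMeasurable_condExpL2 hm F)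
    rw [integral_condExpL2_eq hm F hs hμs.ne]
    exact integral_congr_ae (ae_restrict_of_ae hFf)
  have hc0 : (condExpL2 E ℝ hm F : Ω → E) =ᵐ[μ] 0 := hceq.trans hcond
  have h1 : ∫ ω, ⟪f ω, g ω⟫ ∂μ = ⟪F, G⟫ := by
    rw [L2.inner_def]
    refine integral_congr_ae ?_
    filter_upwards [hFf, hGg] with ω h1 h2
    rw [h1, h2]
  rw [h1, ← inner_condExpL2_eq_inner_fun hm F G hGm, L2.inner_def]
  have hz : (fun ω => ⟪(condExpL2 E ℝ hm F : Ω → E) ω, G ω⟫) =ᵐ[μ] 0 := by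
    filter_upwards [hc0] with ω h
    simp [h]
  rw [integral_congr_ae hz]
  simp

end AuxLemmas

/-- ANOVA decomposition of the generalized variance: the variance of `f(X)` is the sum of
the variances of its ANOVA components. -/
theorem anova_variance_decomposition
    {Ω : Type*} [MeasurableSpace Ω] (μ : Measure Ω) [IsProbabilityMeasure μ]
    {N n : ℕ} {𝒳 : Fin N → Type*} [∀ i, MeasurableSpace (𝒳 i)]
    (X : ∀ i, Ω → 𝒳 i) (hX : ∀ i, Measurable (X i))
    (hindep : iIndepFun X μ)
    (f : (∀ i, 𝒳 i) → EuclideanSpace ℝ (Fin n)) (hf : Measurable f)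
    (hf2 : MemLp (fun ω => f (fun i => X i ω)) 2 μ)
    (F : Finset (Fin N) → Ω → EuclideanSpace ℝ (Fin n))
    (hF : IsANOVADecomp μ X (fun ω => f (fun i => X i ω)) F) :
    gVar μ (fun ω => f (fun i => X i ω)) = ∑ J : Finset (Fin N), gVar μ (F J) := by
  classical
  obtain ⟨hmeas, hL2, hcondz, hsum⟩ := hF
  set g : Ω → EuclideanSpace ℝ (Fin n) := fun ω => f (fun i => X i ω) with hgdef
  have hmi : ∀ i : Fin N,
      (⨆ (j : Fin N) (_ : j ≠ i), MeasurableSpace.comap (X j) inferInstance)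
        ≤ ‹MeasurableSpace Ω› :=
    fun i => iSup₂_le fun j _ => (hX j).comap_le
  have hKle : ∀ (K : Finset (Fin N)) (i : Fin N), i ∉ K →
      (⨆ j ∈ K, MeasurableSpace.comap (X j) inferInstance) ≤
        ⨆ (j : Fin N) (_ : j ≠ i), MeasurableSpace.comap (X j) inferInstance := by
    intro K i hi
    refine iSup₂_le fun j hj => ?_
    have hji : j ≠ i := fun h => hi (h ▸ hj)
    exact le_iSup₂_of_le j hji le_rfl
  have hint : ∀ J, Integrable (F J) μ := fun J => (hL2 J).integrable one_le_two
  have hmean : ∀ J : Finset (Fin N), J.Nonempty → ∫ ω, F J ω ∂μ = 0 := by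
    rintro J ⟨i, hi⟩
    rw [← integral_condExp (hmi i) (f := F J), integral_congr_ae (hcondz J i hi)]
    simp
  set c : Finset (Fin N) → EuclideanSpace ℝ (Fin n) := fun J => ∫ ω, F J ω ∂μ with hcdef
  set G : Finset (Fin N) → Ω → EuclideanSpace ℝ (Fin n) := fun J ω => F J ω - c J with hGdef
  have hGL2 : ∀ J, MemLp (G J) 2 μ := fun J => (hL2 J).sub (memLp_const (c J))
  have hInnerInt : ∀ J K, Integrable (fun ω => ⟪G J ω, G K ω⟫) μ :=
    fun J K => memLp_two_integrable_inner (hGL2 J) (hGL2 K)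
  have hcross : ∀ J K : Finset (Fin N), (∃ i ∈ J, i ∉ K) →
      ∫ ω, ⟪G J ω, G K ω⟫ ∂μ = 0 := by
    rintro J K ⟨i, hiJ, hiK⟩
    have hcJ : c J = 0 := hmean J ⟨i, hiJ⟩
    have h1 : ∫ ω, ⟪F J ω, F K ω⟫ ∂μ = 0 :=
      integral_inner_eq_zero_of_condexp_eq_zero (hmi i) (hL2 J) (hL2 K)
        ((hmeas K).mono (hKle K i hiK)) (hcondz J i hiJ)
    have h2 : ∫ ω, ⟪F J ω, c K⟫ ∂μ = 0 := by
      calc ∫ ω, ⟪F J ω, c K⟫ ∂μ = ∫ ω, ⟪c K, F J ω⟫ ∂μ := by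
            simp_rw [real_inner_comm]
        _ = ⟪c K, ∫ ω, F J ω ∂μ⟫ := integral_inner (hint J) (c K)
        _ = 0 := by rw [show (∫ ω, F J ω ∂μ) = c J from rfl, hcJ]; simp
    calc ∫ ω, ⟪G J ω, G K ω⟫ ∂μ
        = ∫ ω, (⟪F J ω, F K ω⟫ - ⟪F J ω, c K⟫) ∂μ := by
          refine integral_congr_ae (Filter.Eventually.of_forall fun ω => ?_)
          simp [hGdef, hcJ, inner_sub_right]
      _ = (∫ ω, ⟪F J ω, F K ω⟫ ∂μ) - ∫ ω, ⟪F J ω, c K⟫ ∂μ :=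
          integral_sub (memLp_two_integrable_inner (hL2 J) (hL2 K)) ((hint J).inner_const _)
      _ = 0 := by rw [h1, h2, sub_zero]
  have hcross' : ∀ J K : Finset (Fin N), J ≠ K → ∫ ω, ⟪G J ω, G K ω⟫ ∂μ = 0 := by
    intro J K hJK
    by_cases hex : ∃ i ∈ J, i ∉ K
    · exact hcross J K hex
    · push_neg at hex
      have hKJ : ¬ K ⊆ J := fun h => hJK (Finset.Subset.antisymm (fun x hx => hex x hx) h)
      obtain ⟨i, hiK, hiJ⟩ := Finset.not_subset.mp hKJ
      rw [← hcross K J ⟨i, hiK, hiJ⟩]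
      exact integral_congr_ae (Filter.Eventually.of_forall fun ω => real_inner_comm _ _)
  have hdiag : ∀ J, ∫ ω, ⟪G J ω, G J ω⟫ ∂μ = gVar μ (F J) := by
    intro J
    rw [gVar]
    refine integral_congr_ae (Filter.Eventually.of_forall fun ω => ?_)
    show ⟪G J ω, G J ω⟫ = ‖F J ω - ∫ ω', F J ω' ∂μ‖ ^ 2
    rw [real_inner_self_eq_norm_sq]
  have hsum_int : ∫ ω, g ω ∂μ = ∑ J : Finset (Fin N), c J := by
    rw [integral_congr_ae hsum, integral_finset_sum _ fun J _ => hint J]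
  have key : gVar μ g = ∫ ω, ‖∑ J : Finset (Fin N), G J ω‖ ^ 2 ∂μ := by
    rw [gVar]
    refine integral_congr_ae ?_
    filter_upwards [hsum] with ω hω
    rw [show (∫ ω', g ω' ∂μ) = ∑ J : Finset (Fin N), c J from hsum_int, hω,
      ← Finset.sum_sub_distrib]
  rw [key]
  have hexp : (fun ω => ‖∑ J : Finset (Fin N), G J ω‖ ^ 2)
      =ᵐ[μ] fun ω => ∑ J : Finset (Fin N), ∑ K : Finset (Fin N), ⟪G J ω, G K ω⟫ := by
    refine Filter.Eventually.of_forall fun ω => ?_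
    show ‖∑ J : Finset (Fin N), G J ω‖ ^ 2 = ∑ J : Finset (Fin N), ∑ K : Finset (Fin N), ⟪G J ω, G K ω⟫
    rw [← real_inner_self_eq_norm_sq, inner_sum]
    simp_rw [sum_inner]
    rw [Finset.sum_comm]
  rw [integral_congr_ae hexp,
    integral_finset_sum _ fun J _ => integrable_finset_sum _ fun K _ => hInnerInt J K]
  refine Finset.sum_congr rfl fun J _ => ?_
  rw [integral_finset_sum _ fun K _ => hInnerInt J K,
    Finset.sum_eq_single_of_mem J (Finset.mem_univ J) fun K _ hK => hcross' J K (Ne.symm hK)]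
  exact hdiag J
end

section
/- Let X = (X_1, ..., X_N) be a vector of N mutually independent random variables, let f(X) be a square-integrable R^n-valued random vector, and let (f_K(X_K))_{K subset of {1,...,N}} be its ANOVA decomposition. Then for every subset J of {1,...,N}, the coordinatewise conditional expectation of f(X) given X_J equals the partial sum of ANOVA components over subsets of J: E(f(X) | X_J) = sum over K subset of J of f_K(X_K), almost surely. -/
open MeasureTheory ProbabilityTheory

/-- The conditional expectation of `f(X)` given the subvector `X_J` equals the sum of the
ANOVA components over all subsets `K ⊆ J`, almost surely. -/
theorem anova_condexp_eq_partial_sum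
    {Ω : Type*} [MeasurableSpace Ω] (μ : Measure Ω) [IsProbabilityMeasure μ]
    {N n : ℕ} {𝒳 : Fin N → Type*} [∀ i, MeasurableSpace (𝒳 i)]
    (X : ∀ i, Ω → 𝒳 i) (hX : ∀ i, Measurable (X i))
    (hindep : iIndepFun X μ)
    (f : (∀ i, 𝒳 i) → EuclideanSpace ℝ (Fin n)) (hf : Measurable f)
    (hf2 : MemLp (fun ω => f (fun i => X i ω)) 2 μ)
    (F : Finset (Fin N) → Ω → EuclideanSpace ℝ (Fin n))
    (hF : IsANOVADecomp μ X (fun ω => f (fun i => X i ω)) F) :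
    ∀ J : Finset (Fin N),
      μ[(fun ω => f (fun i => X i ω)) | ⨆ i ∈ J, MeasurableSpace.comap (X i) inferInstance]
        =ᵐ[μ] fun ω => ∑ K ∈ J.powerset, F K ω := by
  intro J
  obtain ⟨hmeas, hL2, hvanish, hsum⟩ := hF
  have hmJle : (⨆ i ∈ J, MeasurableSpace.comap (X i) inferInstance) ≤ ‹MeasurableSpace Ω› :=
    iSup_le fun i => iSup_le fun _ => (hX i).comap_le
  have hint : ∀ K : Finset (Fin N), Integrable (F K) μ :=
    fun K => (hL2 K).integrable one_le_two
  have h1 : μ[(fun ω => f fun i => X i ω)|⨆ i ∈ J, MeasurableSpace.comap (X i) inferInstance]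
      =ᵐ[μ] μ[(fun ω => ∑ K : Finset (Fin N), F K ω)|⨆ i ∈ J, MeasurableSpace.comap (X i) inferInstance] :=
    condExp_congr_ae hsum
  have h2 : μ[(fun ω => ∑ K : Finset (Fin N), F K ω)|⨆ i ∈ J, MeasurableSpace.comap (X i) inferInstance]
      =ᵐ[μ] ∑ K : Finset (Fin N), μ[F K|⨆ i ∈ J, MeasurableSpace.comap (X i) inferInstance] := by
    have heq : (fun ω => ∑ K : Finset (Fin N), F K ω) = ∑ K : Finset (Fin N), F K := by
      ext ω j
      simp [Finset.sum_apply]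
    rw [heq]
    exact condExp_finset_sum (fun K _ => hint K) _
  have h3 : ∀ K : Finset (Fin N), K ∈ J.powerset →
      μ[F K|⨆ i ∈ J, MeasurableSpace.comap (X i) inferInstance] =ᵐ[μ] F K := by
    intro K hK
    have hKJ : K ⊆ J := Finset.mem_powerset.mp hK
    have hle' : (⨆ i ∈ K, MeasurableSpace.comap (X i) inferInstance)
        ≤ ⨆ i ∈ J, MeasurableSpace.comap (X i) inferInstance := by
      refine iSup_le fun i => iSup_le fun hi => ?_
      exact le_iSup_of_le i (le_iSup_of_le (hKJ hi) le_rfl)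
    exact condExp_of_aestronglyMeasurable' hmJle ((hmeas K).mono hle') (hint K)
  have h4 : ∀ K : Finset (Fin N), K ∉ J.powerset →
      μ[F K|⨆ i ∈ J, MeasurableSpace.comap (X i) inferInstance] =ᵐ[μ] 0 := by
    intro K hK
    obtain ⟨i, hiK, hiJ⟩ : ∃ i ∈ K, i ∉ J := by
      by_contra h
      push_neg at h
      exact hK (Finset.mem_powerset.mpr h)
    have hle2 : (⨆ i ∈ J, MeasurableSpace.comap (X i) inferInstance)
        ≤ ⨆ (j : Fin N) (_ : j ≠ i), MeasurableSpace.comap (X j) inferInstance := by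
      refine iSup_le fun j => iSup_le fun hj => ?_
      exact le_iSup_of_le j (le_iSup_of_le (fun h => hiJ (h ▸ hj)) le_rfl)
    have hmile : (⨆ (j : Fin N) (_ : j ≠ i), MeasurableSpace.comap (X j) inferInstance)
        ≤ ‹MeasurableSpace Ω› :=
      iSup_le fun j => iSup_le fun _ => (hX j).comap_le
    have htower := condExp_condExp_of_le (μ := μ) (f := F K) hle2 hmile
    calc μ[F K|⨆ i ∈ J, MeasurableSpace.comap (X i) inferInstance]
        =ᵐ[μ] μ[μ[F K|⨆ (j : Fin N) (_ : j ≠ i), MeasurableSpace.comap (X j) inferInstance]|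
            ⨆ i ∈ J, MeasurableSpace.comap (X i) inferInstance] := htower.symm
      _ =ᵐ[μ] μ[(0 : Ω → EuclideanSpace ℝ (Fin n))|
            ⨆ i ∈ J, MeasurableSpace.comap (X i) inferInstance] :=
          condExp_congr_ae (hvanish K i hiK)
      _ = 0 := condExp_zero
  refine h1.trans (h2.trans ?_)
  have hall : ∀ᵐ ω ∂μ, ∀ K : Finset (Fin N),
      (μ[F K|⨆ i ∈ J, MeasurableSpace.comap (X i) inferInstance]) ω
        = if K ∈ J.powerset then F K ω else 0 := by
    rw [MeasureTheory.ae_all_iff]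
    intro K
    by_cases hK : K ∈ J.powerset
    · filter_upwards [h3 K hK] with ω hω
      simp [hK, hω]
    · filter_upwards [h4 K hK] with ω hω
      simp [hK, hω]
  filter_upwards [hall] with ω hω
  rw [Finset.sum_apply]
  calc ∑ K : Finset (Fin N), (μ[F K|⨆ i ∈ J, MeasurableSpace.comap (X i) inferInstance]) ω
      = ∑ K : Finset (Fin N), (if K ∈ J.powerset then F K ω else 0) :=
        Finset.sum_congr rfl fun K _ => hω K
    _ = ∑ K ∈ Finset.univ ∩ J.powerset, F K ω := by rw [Finset.sum_ite_mem]
    _ = ∑ K ∈ J.powerset, F K ω := by rw [Finset.univ_inter]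
end

section
/- Let X_1, X_1', X_2 be mutually independent random variables with X_1' having the same distribution as X_1, and let f be measurable with f(X_1,X_2) a square-integrable real random variable. Then the symmetrized total-sensitivity-index estimator is unbiased: E[(1/2) * (f(X_1,X_2) - f(X_1',X_2))^2] = E[f(X_1,X_2)^2] - E[(E(f(X_1,X_2)|X_2))^2], the right hand side being the total sensitivity index V_1^tot of f(X_1,X_2) with respect to its first argument. -/
open MeasureTheory ProbabilityTheory
open scoped ENNReal

/-- Unbiasedness of the symmetrized estimator of the total sensitivity index: for `X₁, X₁', X₂`
mutually independent with `X₁' ~ X₁` and `f(X₁,X₂)` square-integrable,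
`E[(1/2)(f(X₁,X₂) - f(X₁',X₂))²] = E[f(X₁,X₂)²] - E[(E(f(X₁,X₂)|X₂))²] = V₁ᵗᵒᵗ`. -/
theorem symmetrized_total_index_estimator_unbiased
    {Ω α β : Type*} [MeasurableSpace Ω] [MeasurableSpace α] [MeasurableSpace β]
    (μ : Measure Ω) [IsProbabilityMeasure μ]
    (X1 X1' : Ω → α) (X2 : Ω → β)
    (hX1 : Measurable X1) (hX1' : Measurable X1') (hX2 : Measurable X2)
    (h11 : IndepFun X1 X1' μ)
    (h12 : IndepFun (fun ω => (X1 ω, X1' ω)) X2 μ)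
    (hid : IdentDistrib X1' X1 μ μ)
    (f : α × β → ℝ) (hf : Measurable f)
    (hf2 : MemLp (fun ω => f (X1 ω, X2 ω)) 2 μ) :
    ∫ ω, (1 / 2 : ℝ) * (f (X1 ω, X2 ω) - f (X1' ω, X2 ω)) ^ 2 ∂μ
      = (∫ ω, (f (X1 ω, X2 ω)) ^ 2 ∂μ)
        - ∫ ω, ((μ[(fun ω' => f (X1 ω', X2 ω')) | MeasurableSpace.comap X2 inferInstance]) ω) ^ 2 ∂μ := by
  have hP1 : IsProbabilityMeasure (μ.map X1) := Measure.isProbabilityMeasure_map hX1.aemeasurable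
  have hP2 : IsProbabilityMeasure (μ.map X2) := Measure.isProbabilityMeasure_map hX2.aemeasurable
  have hpair : Measurable fun ω => (X1 ω, X2 ω) := hX1.prodMk hX2
  have hpair11 : Measurable fun ω => (X1 ω, X1' ω) := hX1.prodMk hX1'
  have htriple : Measurable fun ω => ((X1 ω, X1' ω), X2 ω) := hpair11.prodMk hX2
  have hX12 : IndepFun X1 X2 μ := h12.comp measurable_fst measurable_id
  have hmap11 : μ.map (fun ω => (X1 ω, X1' ω)) = (μ.map X1).prod (μ.map X1) := by
    rw [(indepFun_iff_map_prod_eq_prod_map_map hX1.aemeasurable hX1'.aemeasurable).mp h11,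
      hid.map_eq]
  have hA : μ.map (fun ω => (X1 ω, X2 ω)) = (μ.map X1).prod (μ.map X2) :=
    (indepFun_iff_map_prod_eq_prod_map_map hX1.aemeasurable hX2.aemeasurable).mp hX12
  have hC : μ.map (fun ω => ((X1 ω, X1' ω), X2 ω))
      = ((μ.map X1).prod (μ.map X1)).prod (μ.map X2) := by
    rw [(indepFun_iff_map_prod_eq_prod_map_map hpair11.aemeasurable hX2.aemeasurable).mp h12,
      hmap11]
  -- f is in L² of the product law
  have hfν : MemLp f 2 ((μ.map X1).prod (μ.map X2)) := by
    rw [← hA]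
    exact (memLp_map_measure_iff (hA ▸ hf.aestronglyMeasurable) hpair.aemeasurable).mpr hf2
  have hfi : Integrable f ((μ.map X1).prod (μ.map X2)) := hfν.integrable one_le_two
  -- the conditional mean function
  set g : β → ℝ := fun z => ∫ x, f (x, z) ∂(μ.map X1) with hgdef
  have hgsm : StronglyMeasurable g := hf.stronglyMeasurable.integral_prod_left'
  have hgm : Measurable g := hgsm.measurable
  have hgint : Integrable g (μ.map X2) := hfi.integral_prod_right
  have hfX_int : Integrable (fun ω => f (X1 ω, X2 ω)) μ := hf2.integrable one_le_two
  have hgX_int : Integrable (fun ω => g (X2 ω)) μ :=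
    (integrable_map_measure hgsm.aestronglyMeasurable hX2.aemeasurable).mp hgint
  -- identification of the conditional expectation
  have hce : (fun ω => g (X2 ω)) =ᵐ[μ]
      μ[(fun ω' => f (X1 ω', X2 ω')) | MeasurableSpace.comap X2 inferInstance] := by
    refine ae_eq_condExp_of_forall_setIntegral_eq hX2.comap_le hfX_int
      (fun s _ _ => hgX_int.integrableOn) ?_ ?_
    · intro s hs _
      obtain ⟨t, ht, rfl⟩ := hs
      have h1 : ∫ ω in X2 ⁻¹' t, g (X2 ω) ∂μ = ∫ z in t, g z ∂(μ.map X2) :=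
        (setIntegral_map ht hgsm.aestronglyMeasurable hX2.aemeasurable).symm
      have hprodr : (μ.map X1).prod ((μ.map X2).restrict t)
          = ((μ.map X1).prod (μ.map X2)).restrict (Set.univ ×ˢ t) := by
        rw [← Measure.prod_restrict, Measure.restrict_univ]
      have hfir : Integrable f ((μ.map X1).prod ((μ.map X2).restrict t)) := by
        rw [hprodr]; exact hfi.restrict
      have h2 : ∫ ω in X2 ⁻¹' t, f (X1 ω, X2 ω) ∂μ
          = ∫ p in Set.univ ×ˢ t, f p ∂((μ.map X1).prod (μ.map X2)) := by
        rw [← hA, setIntegral_map (MeasurableSet.univ.prod ht)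
          (hA ▸ hf.aestronglyMeasurable) hpair.aemeasurable,
          show (fun ω => (X1 ω, X2 ω)) ⁻¹' (Set.univ ×ˢ t) = X2 ⁻¹' t from by
            ext ω; simp [Set.mem_prod]]
      have h3 : ∫ p in Set.univ ×ˢ t, f p ∂((μ.map X1).prod (μ.map X2))
          = ∫ z in t, g z ∂(μ.map X2) := by
        rw [← hprodr]
        exact integral_prod_symm f hfir
      rw [h1, h2, h3]
    · exact StronglyMeasurable.aestronglyMeasurable
        (hgsm.comp_measurable (comap_measurable X2))
  -- measure preserving projections from the triple product
  have hmp1 : MeasurePreserving (fun p : (α × α) × β => (p.1.1, p.2)) (((μ.map X1).prod (μ.map X1)).prod (μ.map X2))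
      ((μ.map X1).prod (μ.map X2)) := by
    have h1 : MeasurePreserving (Prod.fst : α × α → α) ((μ.map X1).prod (μ.map X1)) (μ.map X1) :=
      ⟨measurable_fst, by simp⟩
    exact h1.prod (MeasurePreserving.id (μ.map X2))
  have hmp2 : MeasurePreserving (fun p : (α × α) × β => (p.1.2, p.2)) (((μ.map X1).prod (μ.map X1)).prod (μ.map X2))
      ((μ.map X1).prod (μ.map X2)) := by
    have h1 : MeasurePreserving (Prod.snd : α × α → α) ((μ.map X1).prod (μ.map X1)) (μ.map X1) :=
      ⟨measurable_snd, by simp⟩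
    exact h1.prod (MeasurePreserving.id (μ.map X2))
  have ha : MemLp (fun p : (α × α) × β => f (p.1.1, p.2)) 2 (((μ.map X1).prod (μ.map X1)).prod (μ.map X2)) := hfν.comp_measurePreserving hmp1
  have hb : MemLp (fun p : (α × α) × β => f (p.1.2, p.2)) 2 (((μ.map X1).prod (μ.map X1)).prod (μ.map X2)) := hfν.comp_measurePreserving hmp2
  have hab_int : Integrable (fun p : (α × α) × β => f (p.1.1, p.2) * f (p.1.2, p.2)) (((μ.map X1).prod (μ.map X1)).prod (μ.map X2)) := by
    have hpqr : (1 : ℝ≥0∞) / 1 = 1 / 2 + 1 / 2 := by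
      rw [ENNReal.add_halves]; norm_num
    exact memLp_one_iff_integrable.mp (hb.smul ha (r := 1) (hpqr := ⟨by simpa [one_div] using hpqr.symm⟩))
  have hasq : Integrable (fun p : (α × α) × β => f (p.1.1, p.2) ^ 2) (((μ.map X1).prod (μ.map X1)).prod (μ.map X2)) := ha.integrable_sq
  have hbsq : Integrable (fun p : (α × α) × β => f (p.1.2, p.2) ^ 2) (((μ.map X1).prod (μ.map X1)).prod (μ.map X2)) := hb.integrable_sq
  -- transfer of the LHS integral to the triple product
  have hL : ∫ ω, (1 / 2 : ℝ) * (f (X1 ω, X2 ω) - f (X1' ω, X2 ω)) ^ 2 ∂μ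
      = ∫ p, (1 / 2 : ℝ) * (f (p.1.1, p.2) - f (p.1.2, p.2)) ^ 2 ∂(((μ.map X1).prod (μ.map X1)).prod (μ.map X2)) := by
    rw [← hC, integral_map htriple.aemeasurable]
    exact Measurable.aestronglyMeasurable (by fun_prop)
  -- the squared terms
  have hEa : ∫ p, f (p.1.1, p.2) ^ 2 ∂(((μ.map X1).prod (μ.map X1)).prod (μ.map X2)) = ∫ p, f p ^ 2 ∂((μ.map X1).prod (μ.map X2)) := by
    rw [← hmp1.map_eq, integral_map hmp1.measurable.aemeasurable
      ((hf.pow_const 2).aestronglyMeasurable)]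
  have hEb : ∫ p, f (p.1.2, p.2) ^ 2 ∂(((μ.map X1).prod (μ.map X1)).prod (μ.map X2)) = ∫ p, f p ^ 2 ∂((μ.map X1).prod (μ.map X2)) := by
    rw [← hmp2.map_eq, integral_map hmp2.measurable.aemeasurable
      ((hf.pow_const 2).aestronglyMeasurable)]
  -- the cross term
  have hcross : ∫ p, f (p.1.1, p.2) * f (p.1.2, p.2) ∂(((μ.map X1).prod (μ.map X1)).prod (μ.map X2)) = ∫ z, g z ^ 2 ∂(μ.map X2) := by
    rw [integral_prod_symm _ hab_int]
    refine integral_congr_ae (Filter.Eventually.of_forall fun z => ?_)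
    have := integral_prod_mul (μ := μ.map X1) (ν := μ.map X1)
      (fun x => f (x, z)) (fun y => f (y, z))
    simpa [sq, hgdef] using this
  -- the RHS pieces
  have hR1 : ∫ ω, f (X1 ω, X2 ω) ^ 2 ∂μ = ∫ p, f p ^ 2 ∂((μ.map X1).prod (μ.map X2)) := by
    rw [← hA, integral_map hpair.aemeasurable
      (hA ▸ ((hf.pow_const 2).aestronglyMeasurable))]
  have hR2 : ∫ ω, ((μ[(fun ω' => f (X1 ω', X2 ω')) | MeasurableSpace.comap X2 inferInstance]) ω) ^ 2 ∂μ
      = ∫ z, g z ^ 2 ∂(μ.map X2) := by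
    have h1 : ∫ ω, ((μ[(fun ω' => f (X1 ω', X2 ω')) | MeasurableSpace.comap X2 inferInstance]) ω) ^ 2 ∂μ
        = ∫ ω, g (X2 ω) ^ 2 ∂μ := by
      refine integral_congr_ae ?_
      filter_upwards [hce] with ω h
      rw [h]
    rw [h1, ← integral_map hX2.aemeasurable ((hgm.pow_const 2).aestronglyMeasurable)]
  -- expand the square and conclude
  have hexp : (fun p : (α × α) × β => (1 / 2 : ℝ) * (f (p.1.1, p.2) - f (p.1.2, p.2)) ^ 2)
      = fun p => ((1 / 2 : ℝ) * f (p.1.1, p.2) ^ 2 + (1 / 2 : ℝ) * f (p.1.2, p.2) ^ 2)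
        - f (p.1.1, p.2) * f (p.1.2, p.2) := funext fun p => by ring
  have hsplit : ∫ p : (α × α) × β, ((1 / 2 : ℝ) * f (p.1.1, p.2) ^ 2
        + (1 / 2 : ℝ) * f (p.1.2, p.2) ^ 2) - f (p.1.1, p.2) * f (p.1.2, p.2) ∂(((μ.map X1).prod (μ.map X1)).prod (μ.map X2))
      = (∫ p : (α × α) × β, ((1 / 2 : ℝ) * f (p.1.1, p.2) ^ 2
        + (1 / 2 : ℝ) * f (p.1.2, p.2) ^ 2) ∂(((μ.map X1).prod (μ.map X1)).prod (μ.map X2)))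
        - ∫ p : (α × α) × β, f (p.1.1, p.2) * f (p.1.2, p.2) ∂(((μ.map X1).prod (μ.map X1)).prod (μ.map X2)) :=
    integral_sub ((hasq.const_mul _).add (hbsq.const_mul _)) hab_int
  have hadd : ∫ p : (α × α) × β, ((1 / 2 : ℝ) * f (p.1.1, p.2) ^ 2
        + (1 / 2 : ℝ) * f (p.1.2, p.2) ^ 2) ∂(((μ.map X1).prod (μ.map X1)).prod (μ.map X2))
      = (∫ p : (α × α) × β, (1 / 2 : ℝ) * f (p.1.1, p.2) ^ 2 ∂(((μ.map X1).prod (μ.map X1)).prod (μ.map X2)))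
        + ∫ p : (α × α) × β, (1 / 2 : ℝ) * f (p.1.2, p.2) ^ 2 ∂(((μ.map X1).prod (μ.map X1)).prod (μ.map X2)) :=
    integral_add (hasq.const_mul _) (hbsq.const_mul _)
  rw [hL, hexp, hsplit, hadd, integral_const_mul, integral_const_mul, hEa, hEb, hcross, hR1, hR2]
  ring
end

section
/- Let X_1, X_1', X_2, X_2' be mutually independent random variables with X_1' distributed as X_1 and X_2' distributed as X_2, and let f be measurable with f(X_1,X_2) a square-integrable real random variable. Then the symmetrized main-sensitivity-index estimator is unbiased: E[(1/2) * (f(X_1,X_2) - f(X_1',X_2)) * (f(X_1,X_2') - f(X_1',X_2'))] = Var(E(f(X_1,X_2)|X_1)), the right hand side being the main sensitivity index V_1 of f(X_1,X_2) with respect to its first argument. -/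
open MeasureTheory ProbabilityTheory

lemma sq_integral_le_integral_sq {γ : Type*} [MeasurableSpace γ] (ν : Measure γ)
    [IsProbabilityMeasure ν] {u : γ → ℝ} (hm : AEStronglyMeasurable u ν)
    (h2 : Integrable (fun y => u y ^ 2) ν) :
    (∫ y, u y ∂ν) ^ 2 ≤ ∫ y, u y ^ 2 ∂ν := by
  have huL2 : MemLp u 2 ν := (memLp_two_iff_integrable_sq hm).2 h2
  have h := variance_nonneg u ν
  rw [variance_eq_sub huL2] at h
  simp only [Pi.pow_apply] at h
  linarith

lemma integrable_mul_of_memℒp_two {γ : Type*} [MeasurableSpace γ] {ν : Measure γ}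
    {u v : γ → ℝ} (hu : MemLp u 2 ν) (hv : MemLp v 2 ν) :
    Integrable (fun x => u x * v x) ν :=
  memLp_one_iff_integrable.1 (hv.smul (r := 1) hu)

/-- L² membership of the averaged function. -/
lemma memℒp_integral_prod_right {α β : Type*} [MeasurableSpace α] [MeasurableSpace β]
    (ν₁ : Measure α) (ν₂ : Measure β) [IsProbabilityMeasure ν₁] [IsProbabilityMeasure ν₂]
    {f : α × β → ℝ} (hf : Measurable f) (hfL2 : MemLp f 2 (ν₁.prod ν₂)) :
    MemLp (fun x => ∫ y, f (x, y) ∂ν₂) 2 ν₁ := by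
  have hgsm : StronglyMeasurable (fun x => ∫ y, f (x, y) ∂ν₂) :=
    hf.stronglyMeasurable.integral_prod_right'
  have hsq : Integrable (fun p : α × β => f p ^ 2) (ν₁.prod ν₂) := hfL2.integrable_sq
  have hslice : ∀ᵐ x ∂ν₁, Integrable (fun y => f (x, y) ^ 2) ν₂ := by
    simpa using hsq.prod_right_ae
  have hdom : Integrable (fun x => ∫ y, f (x, y) ^ 2 ∂ν₂) ν₁ := hsq.integral_prod_left
  rw [memLp_two_iff_integrable_sq hgsm.aestronglyMeasurable]
  refine hdom.mono' ((hgsm.measurable.pow_const 2).aestronglyMeasurable) ?_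
  filter_upwards [hslice] with x hx
  rw [Real.norm_eq_abs, abs_le]
  have hb : (∫ y, f (x, y) ∂ν₂) ^ 2 ≤ ∫ y, f (x, y) ^ 2 ∂ν₂ :=
    sq_integral_le_integral_sq ν₂ ((hf.comp measurable_prodMk_left).aestronglyMeasurable) hx
  have hnn : (0:ℝ) ≤ ∫ y, f (x, y) ^ 2 ∂ν₂ := integral_nonneg fun y => sq_nonneg _
  constructor <;> nlinarith [sq_nonneg (∫ y, f (x, y) ∂ν₂)]

/-- The symmetrized-estimator computation over the product measure. -/
lemma symmetrized_product_calc {α β : Type*} [MeasurableSpace α] [MeasurableSpace β]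
    (ν₁ : Measure α) (ν₂ : Measure β) [IsProbabilityMeasure ν₁] [IsProbabilityMeasure ν₂]
    {f : α × β → ℝ} (hf : Measurable f) (hfL2 : MemLp f 2 (ν₁.prod ν₂)) :
    ∫ p, (1 / 2 : ℝ) * (f (p.1.1, p.2.1) - f (p.1.2, p.2.1))
        * (f (p.1.1, p.2.2) - f (p.1.2, p.2.2)) ∂((ν₁.prod ν₁).prod (ν₂.prod ν₂))
      = (∫ x, (∫ y, f (x, y) ∂ν₂) ^ 2 ∂ν₁) - (∫ x, ∫ y, f (x, y) ∂ν₂ ∂ν₁) ^ 2 := by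
  set ρ : Measure ((α × α) × (β × β)) := (ν₁.prod ν₁).prod (ν₂.prod ν₂) with hρdef
  set g : α → ℝ := fun x => ∫ y, f (x, y) ∂ν₂ with hgdef
  have hgsm : StronglyMeasurable g := hf.stronglyMeasurable.integral_prod_right'
  have hgm : Measurable g := hgsm.measurable
  have hmapfst1 : Measure.map Prod.fst (ν₁.prod ν₁) = ν₁ := by simp [Measure.map_fst_prod]
  have hmapsnd1 : Measure.map Prod.snd (ν₁.prod ν₁) = ν₁ := by simp [Measure.map_snd_prod]
  have hmapfst2 : Measure.map Prod.fst (ν₂.prod ν₂) = ν₂ := by simp [Measure.map_fst_prod]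
  have hmapsnd2 : Measure.map Prod.snd (ν₂.prod ν₂) = ν₂ := by simp [Measure.map_snd_prod]
  have key : ∀ (φ : α × α → α) (ψ : β × β → β), Measurable φ → Measurable ψ →
      Measure.map φ (ν₁.prod ν₁) = ν₁ → Measure.map ψ (ν₂.prod ν₂) = ν₂ →
      MemLp (fun p : (α × α) × (β × β) => f (φ p.1, ψ p.2)) 2 ρ := by
    intro φ ψ hφ hψ h1 h2
    have hTm : Measurable (fun p : (α × α) × (β × β) => (φ p.1, ψ p.2)) :=
      (hφ.comp measurable_fst).prodMk (hψ.comp measurable_snd)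
    have hT : Measure.map (fun p : (α × α) × (β × β) => (φ p.1, ψ p.2)) ρ = ν₁.prod ν₂ := by
      have h3 := Measure.map_prod_map (ν₁.prod ν₁) (ν₂.prod ν₂) hφ hψ
      rw [h1, h2] at h3
      rw [hρdef]
      exact h3.symm
    exact (memLp_map_measure_iff hf.aestronglyMeasurable hTm.aemeasurable).1
      (by rw [hT]; exact hfL2)
  have hL11 := key Prod.fst Prod.fst measurable_fst measurable_fst hmapfst1 hmapfst2
  have hL21 := key Prod.snd Prod.fst measurable_snd measurable_fst hmapsnd1 hmapfst2
  have hL12 := key Prod.fst Prod.snd measurable_fst measurable_snd hmapfst1 hmapsnd2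
  have hL22 := key Prod.snd Prod.snd measurable_snd measurable_snd hmapsnd1 hmapsnd2
  have hterm : ∀ (φ ψ : α × α → α), Measurable φ → Measurable ψ →
      Measure.map φ (ν₁.prod ν₁) = ν₁ → Measure.map ψ (ν₁.prod ν₁) = ν₁ →
      ∫ p, f (φ p.1, p.2.1) * f (ψ p.1, p.2.2) ∂ρ
        = ∫ a, g (φ a) * g (ψ a) ∂(ν₁.prod ν₁) := by
    intro φ ψ hφ hψ h1 h2
    have hint : Integrable (fun p : (α × α) × (β × β) =>
        f (φ p.1, p.2.1) * f (ψ p.1, p.2.2)) ρ :=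
      integrable_mul_of_memℒp_two (key φ Prod.fst hφ measurable_fst h1 hmapfst2)
        (key ψ Prod.snd hψ measurable_snd h2 hmapsnd2)
    rw [hρdef] at hint ⊢
    rw [integral_prod _ hint]
    refine integral_congr_ae (Filter.Eventually.of_forall fun a => ?_)
    exact integral_prod_mul (fun y => f (φ a, y)) (fun y => f (ψ a, y))
  have hI11 := hterm Prod.fst Prod.fst measurable_fst measurable_fst hmapfst1 hmapfst1
  have hI21 := hterm Prod.snd Prod.fst measurable_snd measurable_fst hmapsnd1 hmapfst1
  have hI12 := hterm Prod.fst Prod.snd measurable_fst measurable_snd hmapfst1 hmapsnd1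
  have hI22 := hterm Prod.snd Prod.snd measurable_snd measurable_snd hmapsnd1 hmapsnd1
  have hgg : ∀ (φ : α × α → α), Measurable φ → Measure.map φ (ν₁.prod ν₁) = ν₁ →
      ∫ a, g (φ a) * g (φ a) ∂(ν₁.prod ν₁) = ∫ x, g x ^ 2 ∂ν₁ := by
    intro φ hφ h1
    rw [show ∫ a, g (φ a) * g (φ a) ∂(ν₁.prod ν₁)
          = ∫ x, g x * g x ∂(Measure.map φ (ν₁.prod ν₁)) from
        (integral_map hφ.aemeasurable ((hgm.mul hgm).aestronglyMeasurable)).symm, h1]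
    simp only [sq]
  have hEgfst : ∫ a, g a.1 * g a.2 ∂(ν₁.prod ν₁) = (∫ x, g x ∂ν₁) ^ 2 := by
    rw [integral_prod_mul g g, sq]
  have hEgsnd : ∫ a, g a.2 * g a.1 ∂(ν₁.prod ν₁) = (∫ x, g x ∂ν₁) ^ 2 := by
    rw [← hEgfst]
    exact integral_congr_ae (Filter.Eventually.of_forall fun a => by ring)
  have hint11 : Integrable (fun p : (α × α) × (β × β) =>
      f (p.1.1, p.2.1) * f (p.1.1, p.2.2)) ρ := integrable_mul_of_memℒp_two hL11 hL12
  have hint21 : Integrable (fun p : (α × α) × (β × β) =>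
      f (p.1.2, p.2.1) * f (p.1.1, p.2.2)) ρ := integrable_mul_of_memℒp_two hL21 hL12
  have hint12 : Integrable (fun p : (α × α) × (β × β) =>
      f (p.1.1, p.2.1) * f (p.1.2, p.2.2)) ρ := integrable_mul_of_memℒp_two hL11 hL22
  have hint22 : Integrable (fun p : (α × α) × (β × β) =>
      f (p.1.2, p.2.1) * f (p.1.2, p.2.2)) ρ := integrable_mul_of_memℒp_two hL21 hL22
  have hHexp : ∫ p, (1 / 2 : ℝ) * (f (p.1.1, p.2.1) - f (p.1.2, p.2.1))
        * (f (p.1.1, p.2.2) - f (p.1.2, p.2.2)) ∂ρ =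
      (1/2 : ℝ) * ((∫ p, f (p.1.1, p.2.1) * f (p.1.1, p.2.2) ∂ρ)
        - (∫ p, f (p.1.2, p.2.1) * f (p.1.1, p.2.2) ∂ρ)
        - (∫ p, f (p.1.1, p.2.1) * f (p.1.2, p.2.2) ∂ρ)
        + (∫ p, f (p.1.2, p.2.1) * f (p.1.2, p.2.2) ∂ρ)) := by
    have heq : (fun p : (α × α) × (β × β) => (1 / 2 : ℝ)
          * (f (p.1.1, p.2.1) - f (p.1.2, p.2.1)) * (f (p.1.1, p.2.2) - f (p.1.2, p.2.2)))
        = fun p => (1/2 : ℝ) *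
        (f (p.1.1, p.2.1) * f (p.1.1, p.2.2)
          - f (p.1.2, p.2.1) * f (p.1.1, p.2.2)
          - f (p.1.1, p.2.1) * f (p.1.2, p.2.2)
          + f (p.1.2, p.2.1) * f (p.1.2, p.2.2)) := by
      funext p; ring
    have hd1 : Integrable (fun p : (α × α) × (β × β) =>
        f (p.1.1, p.2.1) * f (p.1.1, p.2.2) - f (p.1.2, p.2.1) * f (p.1.1, p.2.2)) ρ :=
      hint11.sub hint21
    have hd2 : Integrable (fun p : (α × α) × (β × β) =>
        f (p.1.1, p.2.1) * f (p.1.1, p.2.2) - f (p.1.2, p.2.1) * f (p.1.1, p.2.2)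
          - f (p.1.1, p.2.1) * f (p.1.2, p.2.2)) ρ := hd1.sub hint12
    rw [heq, integral_const_mul, integral_add hd2 hint22,
      integral_sub hd1 hint12, integral_sub hint11 hint21]
  rw [hHexp, hI11, hI21, hI12, hI22,
    hgg Prod.fst measurable_fst hmapfst1, hgg Prod.snd measurable_snd hmapsnd1,
    hEgfst, hEgsnd]
  ring

/-- Unbiasedness of the symmetrized estimator of the main sensitivity index: for
`X₁, X₁', X₂, X₂'` mutually independent with `X₁' ~ X₁`, `X₂' ~ X₂` and `f(X₁,X₂)`
square-integrable,
`E[(1/2)(f(X₁,X₂) - f(X₁',X₂))(f(X₁,X₂') - f(X₁',X₂'))] = Var(E(f(X₁,X₂)|X₁)) = V₁`. -/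
theorem symmetrized_main_index_estimator_unbiased
    {Ω α β : Type*} [MeasurableSpace Ω] [MeasurableSpace α] [MeasurableSpace β]
    (μ : Measure Ω) [IsProbabilityMeasure μ]
    (X1 X1' : Ω → α) (X2 X2' : Ω → β)
    (hX1 : Measurable X1) (hX1' : Measurable X1')
    (hX2 : Measurable X2) (hX2' : Measurable X2')
    (h11 : IndepFun X1 X1' μ) (h22 : IndepFun X2 X2' μ)
    (h12 : IndepFun (fun ω => (X1 ω, X1' ω)) (fun ω => (X2 ω, X2' ω)) μ)
    (hid1 : IdentDistrib X1' X1 μ μ) (hid2 : IdentDistrib X2' X2 μ μ)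
    (f : α × β → ℝ) (hf : Measurable f)
    (hf2 : MemLp (fun ω => f (X1 ω, X2 ω)) 2 μ) :
    ∫ ω, (1 / 2 : ℝ) * (f (X1 ω, X2 ω) - f (X1' ω, X2 ω))
        * (f (X1 ω, X2' ω) - f (X1' ω, X2' ω)) ∂μ
      = variance (μ[(fun ω' => f (X1 ω', X2 ω')) | MeasurableSpace.comap X1 inferInstance]) μ := by
  haveI : IsProbabilityMeasure (Measure.map X1 μ) := Measure.isProbabilityMeasure_map hX1.aemeasurable
  haveI : IsProbabilityMeasure (Measure.map X2 μ) := Measure.isProbabilityMeasure_map hX2.aemeasurable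
  have hm12 : Measurable (fun ω => (X1 ω, X1' ω)) := hX1.prodMk hX1'
  have hm34 : Measurable (fun ω => (X2 ω, X2' ω)) := hX2.prodMk hX2'
  have hpair1 : Measure.map (fun ω => (X1 ω, X1' ω)) μ
      = (Measure.map X1 μ).prod (Measure.map X1 μ) := by
    rw [(indepFun_iff_map_prod_eq_prod_map_map hX1.aemeasurable hX1'.aemeasurable).1 h11,
      hid1.map_eq]
  have hpair2 : Measure.map (fun ω => (X2 ω, X2' ω)) μ
      = (Measure.map X2 μ).prod (Measure.map X2 μ) := by
    rw [(indepFun_iff_map_prod_eq_prod_map_map hX2.aemeasurable hX2'.aemeasurable).1 h22,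
      hid2.map_eq]
  have hjoint : Measure.map (fun ω => ((X1 ω, X1' ω), (X2 ω, X2' ω))) μ
      = ((Measure.map X1 μ).prod (Measure.map X1 μ)).prod
          ((Measure.map X2 μ).prod (Measure.map X2 μ)) := by
    rw [(indepFun_iff_map_prod_eq_prod_map_map hm12.aemeasurable hm34.aemeasurable).1 h12,
      hpair1, hpair2]
  have h1i2 : IndepFun X1 X2 μ := h12.comp measurable_fst measurable_fst
  have hmap12 : Measure.map (fun ω => (X1 ω, X2 ω)) μ
      = (Measure.map X1 μ).prod (Measure.map X2 μ) :=
    (indepFun_iff_map_prod_eq_prod_map_map hX1.aemeasurable hX2.aemeasurable).1 h1i2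
  have hfL2 : MemLp f 2 ((Measure.map X1 μ).prod (Measure.map X2 μ)) := by
    rw [← hmap12]
    exact (memLp_map_measure_iff hf.aestronglyMeasurable (hX1.prodMk hX2).aemeasurable).2 hf2
  have hfint : Integrable f ((Measure.map X1 μ).prod (Measure.map X2 μ)) :=
    hfL2.integrable one_le_two
  -- the left-hand side
  have hHm : Measurable (fun p : (α × α) × (β × β) =>
      (1 / 2 : ℝ) * (f (p.1.1, p.2.1) - f (p.1.2, p.2.1))
        * (f (p.1.1, p.2.2) - f (p.1.2, p.2.2))) := by
    refine Measurable.mul (measurable_const.mul ?_) ?_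
    · exact (hf.comp ((measurable_fst.fst).prodMk (measurable_snd.fst))).sub
        (hf.comp ((measurable_fst.snd).prodMk (measurable_snd.fst)))
    · exact (hf.comp ((measurable_fst.fst).prodMk (measurable_snd.snd))).sub
        (hf.comp ((measurable_fst.snd).prodMk (measurable_snd.snd)))
  have hΦ : Measurable (fun ω => ((X1 ω, X1' ω), (X2 ω, X2' ω))) := hm12.prodMk hm34
  have hLHS : ∫ ω, (1 / 2 : ℝ) * (f (X1 ω, X2 ω) - f (X1' ω, X2 ω))
        * (f (X1 ω, X2' ω) - f (X1' ω, X2' ω)) ∂μ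
      = ∫ p, (1 / 2 : ℝ) * (f (p.1.1, p.2.1) - f (p.1.2, p.2.1))
          * (f (p.1.1, p.2.2) - f (p.1.2, p.2.2))
          ∂(((Measure.map X1 μ).prod (Measure.map X1 μ)).prod
              ((Measure.map X2 μ).prod (Measure.map X2 μ))) := by
    rw [← hjoint, integral_map hΦ.aemeasurable hHm.aestronglyMeasurable]
  -- the conditional expectation is `g ∘ X1`
  have hm : MeasurableSpace.comap X1 inferInstance ≤ (inferInstance : MeasurableSpace Ω) :=
    hX1.comap_le
  haveI : SigmaFinite (μ.trim hm) := inferInstance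
  have hFint : Integrable (fun ω => f (X1 ω, X2 ω)) μ := hf2.integrable one_le_two
  have hgsm : StronglyMeasurable (fun x => ∫ y, f (x, y) ∂(Measure.map X2 μ)) :=
    hf.stronglyMeasurable.integral_prod_right'
  have hgL2 : MemLp (fun x => ∫ y, f (x, y) ∂(Measure.map X2 μ)) 2 (Measure.map X1 μ) :=
    memℒp_integral_prod_right _ _ hf hfL2
  have hGmem : MemLp (fun ω => ∫ y, f (X1 ω, y) ∂(Measure.map X2 μ)) 2 μ :=
    (memLp_map_measure_iff hgsm.aestronglyMeasurable hX1.aemeasurable).1 hgL2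
  have hGint : Integrable (fun ω => ∫ y, f (X1 ω, y) ∂(Measure.map X2 μ)) μ :=
    hGmem.integrable one_le_two
  have hce : (fun ω => ∫ y, f (X1 ω, y) ∂(Measure.map X2 μ))
      =ᵐ[μ] μ[(fun ω' => f (X1 ω', X2 ω')) | MeasurableSpace.comap X1 inferInstance] := by
    refine ae_eq_condExp_of_forall_setIntegral_eq hm hFint
      (fun s _ _ => hGint.integrableOn) ?_ ?_
    · rintro s ⟨t, ht, rfl⟩ -
      have hGside : ∫ ω in X1 ⁻¹' t, (∫ y, f (X1 ω, y) ∂(Measure.map X2 μ)) ∂μ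
          = ∫ x in t, (∫ y, f (x, y) ∂(Measure.map X2 μ)) ∂(Measure.map X1 μ) :=
        (setIntegral_map ht hgsm.aestronglyMeasurable hX1.aemeasurable).symm
      have hpre : X1 ⁻¹' t = (fun ω => (X1 ω, X2 ω)) ⁻¹' (t ×ˢ Set.univ) := by
        ext ω; simp
      have hint' : Integrable f
          (((Measure.map X1 μ).restrict t).prod (Measure.map X2 μ)) := by
        rw [← Measure.restrict_univ (μ := Measure.map X2 μ), Measure.prod_restrict]
        exact hfint.integrableOn
      have hFside : ∫ ω in X1 ⁻¹' t, f (X1 ω, X2 ω) ∂μ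
          = ∫ x in t, (∫ y, f (x, y) ∂(Measure.map X2 μ)) ∂(Measure.map X1 μ) := by
        rw [hpre, ← setIntegral_map (ht.prod MeasurableSet.univ) hf.aestronglyMeasurable
            (hX1.prodMk hX2).aemeasurable, hmap12]
        rw [show (((Measure.map X1 μ).prod (Measure.map X2 μ)).restrict (t ×ˢ Set.univ))
            = ((Measure.map X1 μ).restrict t).prod (Measure.map X2 μ) from by
          rw [← Measure.restrict_univ (μ := Measure.map X2 μ), Measure.prod_restrict,
            Measure.restrict_univ]]
        rw [integral_prod _ hint']
      exact hGside.trans hFside.symm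
    · exact StronglyMeasurable.aestronglyMeasurable
        (hgsm.comp_measurable (measurable_iff_comap_le.2 le_rfl))
  have hCmem : MemLp (μ[(fun ω' => f (X1 ω', X2 ω')) |
      MeasurableSpace.comap X1 inferInstance]) 2 μ := hGmem.ae_eq hce
  -- compute both sides
  rw [hLHS, symmetrized_product_calc (Measure.map X1 μ) (Measure.map X2 μ) hf hfL2,
    variance_eq_sub hCmem]
  have hce2 : (fun ω => (∫ y, f (X1 ω, y) ∂(Measure.map X2 μ)) ^ 2)
      =ᵐ[μ] (fun ω => (μ[(fun ω' => f (X1 ω', X2 ω')) |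
        MeasurableSpace.comap X1 inferInstance]) ω ^ 2) :=
    hce.mono fun ω h => congrArg (· ^ 2) h
  have e1 : ∫ ω, (μ[(fun ω' => f (X1 ω', X2 ω')) |
        MeasurableSpace.comap X1 inferInstance]) ω ^ 2 ∂μ
      = ∫ x, (∫ y, f (x, y) ∂(Measure.map X2 μ)) ^ 2 ∂(Measure.map X1 μ) := by
    rw [← integral_congr_ae hce2,
      ← integral_map hX1.aemeasurable ((hgsm.measurable.pow_const 2).aestronglyMeasurable)]
  have e2 : ∫ ω, (μ[(fun ω' => f (X1 ω', X2 ω')) |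
        MeasurableSpace.comap X1 inferInstance]) ω ∂μ
      = ∫ x, (∫ y, f (x, y) ∂(Measure.map X2 μ)) ∂(Measure.map X1 μ) := by
    rw [integral_condExp hm,
      ← integral_map (hX1.prodMk hX2).aemeasurable hf.aestronglyMeasurable, hmap12,
      integral_prod _ hfint]
  simp only [Pi.pow_apply]
  rw [e1, e2]
end

section
/- Let X_1, X_2, X_3 be mutually independent random variables and g measurable such that g(X_1,X_2,X_3) has finite fourth moment. Let Y_i[j], for i in {1,2,3} and j in {0,1}, be mutually independent random variables with Y_i[j] distributed as X_i, and write g[i][j][k] = g(Y_1[i], Y_2[j], Y_3[k]) for i,j,k in {0,1}. For i in {0,1} set B[i] = g[1-i][i][0] - g[i][i][0], C[i] = g[1-i][1-i][1] - g[i][1-i][1], and A[i] = B[i] * C[i]. Then Cov(A[0], A[1]) >= 0. -/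
open MeasureTheory ProbabilityTheory
open scoped ENNReal

namespace CovSymAux

variable {X Y : Type*} [MeasurableSpace X] [MeasurableSpace Y]

lemma memLp_mul4 {ν : Measure X} {f g : X → ℝ} (hf : MemLp f 4 ν) (hg : MemLp g 4 ν) :
    MemLp (fun x => f x * g x) 2 ν := by
  have h : (1:ℝ≥0∞) / 2 = 1 / 4 + 1 / 4 := by
    simp only [one_div]
    rw [← two_mul, show (4:ℝ≥0∞) = 2*2 by norm_num, ENNReal.mul_inv (by norm_num) (by norm_num),
      ← mul_assoc, ENNReal.mul_inv_cancel (by norm_num) (by norm_num), one_mul]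
  have := MemLp.smul (𝕜 := ℝ) (hpqr := ⟨by simpa only [one_div] using h.symm⟩) hg hf
  simpa [smul_eq_mul, Pi.mul_def] using this

lemma integrable_mul2 {ν : Measure X} {f g : X → ℝ} (hf : MemLp f 2 ν) (hg : MemLp g 2 ν) :
    Integrable (fun x => f x * g x) ν := by
  have h : (1:ℝ≥0∞) / 1 = 1 / 2 + 1 / 2 := by
    simp only [one_div]
    rw [inv_one, ENNReal.inv_two_add_inv_two]
  have := MemLp.smul (𝕜 := ℝ) (hpqr := ⟨by simpa only [one_div] using h.symm⟩) hg hf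
  rw [← memLp_one_iff_integrable]
  simpa [smul_eq_mul, Pi.mul_def] using this

lemma memLp_comp {νX : Measure X} {νY : Measure Y} {T : X → Y} {p : ℝ≥0∞}
    (hT : MeasurePreserving T νX νY) {f : Y → ℝ} (hfm : AEStronglyMeasurable f νY)
    (hfp : MemLp f p νY) :
    MemLp (fun x => f (T x)) p νX := by
  have h1 : AEStronglyMeasurable f (νX.map T) := by rw [hT.map_eq]; exact hfm
  have := (memLp_map_measure_iff h1 hT.measurable.aemeasurable).mp (by rw [hT.map_eq]; exact hfp)
  exact this

lemma integral_comp {νX : Measure X} {νY : Measure Y} {T : X → Y}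
    (hT : MeasurePreserving T νX νY) {f : Y → ℝ} (hf : AEStronglyMeasurable f νY) :
    ∫ x, f (T x) ∂νX = ∫ y, f y ∂νY := by
  have h1 : AEStronglyMeasurable f (νX.map T) := by rw [hT.map_eq]; exact hf
  rw [← integral_map hT.measurable.aemeasurable h1, hT.map_eq]

lemma sq_integral_le {ν : Measure X} [IsProbabilityMeasure ν] {f : X → ℝ}
    (hf : Integrable f ν) (hf2 : Integrable (fun x => f x ^ 2) ν) :
    (∫ x, f x ∂ν) ^ 2 ≤ ∫ x, f x ^ 2 ∂ν := by
  set c := ∫ x, f x ∂ν with hc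
  have h0 : 0 ≤ ∫ x, (f x - c) ^ 2 ∂ν := integral_nonneg fun x => sq_nonneg _
  have hexp : ∫ x, (f x - c) ^ 2 ∂ν = (∫ x, f x ^ 2 ∂ν) - c ^ 2 := by
    have he : (fun x => (f x - c) ^ 2) = fun x => (f x ^ 2 - (2 * c) * f x) + c ^ 2 := by
      funext x; ring
    have hint1 : Integrable (fun x => f x ^ 2 - 2 * c * f x) ν := hf2.sub (hf.const_mul (2*c))
    rw [he, integral_add hint1 (integrable_const _),
      integral_sub hf2 (hf.const_mul (2*c)), integral_const_mul, integral_const]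
    simp only [measure_univ, probReal_univ, ENNReal.toReal_one, one_smul, ← hc]
    ring
  linarith

lemma pow4_integral_le {ν : Measure X} [IsProbabilityMeasure ν] {f : X → ℝ}
    (hf : Integrable f ν) (hf2 : Integrable (fun x => f x ^ 2) ν)
    (hf4 : Integrable (fun x => f x ^ 4) ν) :
    (∫ x, f x ∂ν) ^ 4 ≤ ∫ x, f x ^ 4 ∂ν := by
  have h1 := sq_integral_le hf hf2
  have h2 := sq_integral_le (f := fun x => f x ^ 2) hf2
    (hf4.congr (Filter.Eventually.of_forall fun x => by ring))
  have h3 : ∫ x, (f x ^ 2) ^ 2 ∂ν = ∫ x, f x ^ 4 ∂ν :=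
    integral_congr_ae (Filter.Eventually.of_forall fun x => by ring)
  calc (∫ x, f x ∂ν) ^ 4 = ((∫ x, f x ∂ν) ^ 2) ^ 2 := by ring
    _ ≤ (∫ x, f x ^ 2 ∂ν) ^ 2 := pow_le_pow_left₀ (sq_nonneg _) h1 2
    _ ≤ ∫ x, (f x ^ 2) ^ 2 ∂ν := h2
    _ = ∫ x, f x ^ 4 ∂ν := h3

lemma integrable_sq_of_memLp4 {ν : Measure X} [IsFiniteMeasure ν] {f : X → ℝ}
    (hf : MemLp f 4 ν) : Integrable (fun x => f x ^ 2) ν :=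
  ((memLp_mul4 hf hf).integrable one_le_two).congr
    (Filter.Eventually.of_forall fun x => by ring)

lemma integrable_pow4_of_memLp4 {ν : Measure X} {f : X → ℝ}
    (hf : MemLp f 4 ν) : Integrable (fun x => f x ^ 4) ν :=
  (integrable_mul2 (memLp_mul4 hf hf) (memLp_mul4 hf hf)).congr
    (Filter.Eventually.of_forall fun x => by ring)

lemma memLp4_of_integrable_pow4 {ν : Measure X} {f : X → ℝ} (hf : Measurable f)
    (h4 : Integrable (fun x => f x ^ 4) ν) : MemLp f 4 ν := by
  have h : MemLp (fun x => ‖f x‖ ^ ((4:ℝ≥0∞)).toReal) ((4:ℝ≥0∞)/4) ν := by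
    rw [show (4:ℝ≥0∞)/4 = 1 from ENNReal.div_self (by norm_num) (by norm_num),
      memLp_one_iff_integrable]
    refine h4.congr (Filter.Eventually.of_forall fun x => ?_)
    show f x ^ 4 = ‖f x‖ ^ ((4:ℝ≥0∞)).toReal
    rw [Real.norm_eq_abs, show ((4:ℝ≥0∞)).toReal = ((4:ℕ):ℝ) by norm_num,
      Real.rpow_natCast, pow_abs, abs_of_nonneg (by positivity)]
  exact (memLp_norm_rpow_iff hf.aestronglyMeasurable (by norm_num) (by norm_num)).mp h


variable {B C : Type*} [MeasurableSpace B] [MeasurableSpace C]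

lemma mp_fst {νB : Measure B} {νC : Measure C} [SFinite νB] [IsProbabilityMeasure νC] :
    MeasurePreserving (Prod.fst : B × C → B) (νB.prod νC) νB :=
  ⟨measurable_fst, by simp⟩

lemma mp_snd {νB : Measure B} {νC : Measure C} [IsProbabilityMeasure νB] [SFinite νC] :
    MeasurePreserving (Prod.snd : B × C → C) (νB.prod νC) νC :=
  ⟨measurable_snd, by simp⟩

variable (νB : Measure B) (νC : Measure C) [IsProbabilityMeasure νB] [IsProbabilityMeasure νC]

lemma slice_F2 (k : B × C → ℝ) (hk : Measurable k) (hk4 : MemLp k 4 (νB.prod νC)) :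
    ∫ q : (B × B) × C × C, k (q.1.1, q.2.1) * k (q.1.2, q.2.2)
        ∂((νB.prod νB).prod (νC.prod νC)) = (∫ p, k p ∂(νB.prod νC)) ^ 2 := by
  have e00 : MeasurePreserving (fun q : (B × B) × C × C => ((q.1.1, q.2.1) : B × C))
      ((νB.prod νB).prod (νC.prod νC)) (νB.prod νC) := mp_fst.prod mp_fst
  have e11 : MeasurePreserving (fun q : (B × B) × C × C => ((q.1.2, q.2.2) : B × C))
      ((νB.prod νB).prod (νC.prod νC)) (νB.prod νC) := mp_snd.prod mp_snd
  have k00 : MemLp (fun q : (B × B) × C × C => k (q.1.1, q.2.1)) 4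
      ((νB.prod νB).prod (νC.prod νC)) := memLp_comp e00 hk.aestronglyMeasurable hk4
  have k11 : MemLp (fun q : (B × B) × C × C => k (q.1.2, q.2.2)) 4
      ((νB.prod νB).prod (νC.prod νC)) := memLp_comp e11 hk.aestronglyMeasurable hk4
  have hI : Integrable (fun q : (B × B) × C × C => k (q.1.1, q.2.1) * k (q.1.2, q.2.2))
      ((νB.prod νB).prod (νC.prod νC)) := (memLp_mul4 k00 k11).integrable one_le_two
  have hkint : Integrable k (νB.prod νC) := hk4.integrable (by norm_num)
  calc ∫ q : (B × B) × C × C, k (q.1.1, q.2.1) * k (q.1.2, q.2.2)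
        ∂((νB.prod νB).prod (νC.prod νC))
      = ∫ bb : B × B, ∫ cc : C × C, k (bb.1, cc.1) * k (bb.2, cc.2) ∂(νC.prod νC)
          ∂(νB.prod νB) := integral_prod _ hI
    _ = ∫ bb : B × B, (∫ c, k (bb.1, c) ∂νC) * (∫ c, k (bb.2, c) ∂νC) ∂(νB.prod νB) := by
        refine integral_congr_ae (Filter.Eventually.of_forall fun bb => ?_)
        exact integral_prod_mul (fun c => k (bb.1, c)) (fun c => k (bb.2, c))
    _ = (∫ b, ∫ c, k (b, c) ∂νC ∂νB) * (∫ b, ∫ c, k (b, c) ∂νC ∂νB) :=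
        integral_prod_mul (fun b => ∫ c, k (b, c) ∂νC) (fun b => ∫ c, k (b, c) ∂νC)
    _ = (∫ p, k p ∂(νB.prod νC)) ^ 2 := by rw [← integral_prod _ hkint]; ring

lemma slice_main (k : B × C → ℝ) (hk : Measurable k) (hk4 : MemLp k 4 (νB.prod νC)) :
    (∫ p, k p ∂(νB.prod νC)) ^ 4 ≤
      ∫ q : (B × B) × C × C, (k (q.1.1, q.2.1) * k (q.1.2, q.2.2)) *
        (k (q.1.2, q.2.1) * k (q.1.1, q.2.2)) ∂((νB.prod νB).prod (νC.prod νC)) := by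
  set Q := (νB.prod νB).prod (νC.prod νC) with hQ
  set σ := νB.prod νC with hσ
  have e00 : MeasurePreserving (fun q : (B × B) × C × C => ((q.1.1, q.2.1) : B × C)) Q σ :=
    mp_fst.prod mp_fst
  have e11 : MeasurePreserving (fun q : (B × B) × C × C => ((q.1.2, q.2.2) : B × C)) Q σ :=
    mp_snd.prod mp_snd
  have e10 : MeasurePreserving (fun q : (B × B) × C × C => ((q.1.2, q.2.1) : B × C)) Q σ :=
    mp_snd.prod mp_fst
  have e01 : MeasurePreserving (fun q : (B × B) × C × C => ((q.1.1, q.2.2) : B × C)) Q σ :=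
    mp_fst.prod mp_snd
  have k00 := memLp_comp e00 hk.aestronglyMeasurable hk4
  have k11 := memLp_comp e11 hk.aestronglyMeasurable hk4
  have k10 := memLp_comp e10 hk.aestronglyMeasurable hk4
  have k01 := memLp_comp e01 hk.aestronglyMeasurable hk4
  have hF4 : Integrable (fun q : (B × B) × C × C =>
      (k (q.1.1, q.2.1) * k (q.1.2, q.2.2)) * (k (q.1.2, q.2.1) * k (q.1.1, q.2.2))) Q :=
    integrable_mul2 (memLp_mul4 k00 k11) (memLp_mul4 k10 k01)
  set M : B × B → ℝ := fun bb => ∫ c, k (bb.1, c) * k (bb.2, c) ∂νC with hM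
  set ζ : C → ℝ := fun c => ∫ b, k (b, c) ∂νB with hζ
  have hkint : Integrable k σ := hk4.integrable (by norm_num)
  -- pointwise inner factorization for F4
  have inner4 : ∀ bb : B × B,
      (∫ cc : C × C, (k (bb.1, cc.1) * k (bb.2, cc.2)) * (k (bb.2, cc.1) * k (bb.1, cc.2))
        ∂(νC.prod νC)) = M bb ^ 2 := by
    intro bb
    have h1 : (∫ cc : C × C, (k (bb.1, cc.1) * k (bb.2, cc.2)) * (k (bb.2, cc.1) * k (bb.1, cc.2))
        ∂(νC.prod νC)) = ∫ cc : C × C, (k (bb.1, cc.1) * k (bb.2, cc.1)) *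
          (k (bb.2, cc.2) * k (bb.1, cc.2)) ∂(νC.prod νC) :=
      integral_congr_ae (Filter.Eventually.of_forall fun cc => by ring)
    rw [h1, integral_prod_mul (fun c => k (bb.1, c) * k (bb.2, c))
      (fun c => k (bb.2, c) * k (bb.1, c))]
    have h2 : (∫ c, k (bb.2, c) * k (bb.1, c) ∂νC) = M bb :=
      integral_congr_ae (Filter.Eventually.of_forall fun c => by ring)
    rw [h2, hM]
    ring
  have step1 : (∫ q : (B × B) × C × C, (k (q.1.1, q.2.1) * k (q.1.2, q.2.2)) *
      (k (q.1.2, q.2.1) * k (q.1.1, q.2.2)) ∂Q) = ∫ bb, M bb ^ 2 ∂(νB.prod νB) := by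
    rw [integral_prod _ hF4]
    exact integral_congr_ae (Filter.Eventually.of_forall fun bb => inner4 bb)
  -- the two-fold product on (B×B) × C
  have gf : MeasurePreserving (fun p : (B × B) × C => ((p.1.1, p.2) : B × C))
      ((νB.prod νB).prod νC) σ := mp_fst.prod (MeasurePreserving.id νC)
  have gs : MeasurePreserving (fun p : (B × B) × C => ((p.1.2, p.2) : B × C))
      ((νB.prod νB).prod νC) σ := mp_snd.prod (MeasurePreserving.id νC)
  have hG2 : Integrable (fun p : (B × B) × C => k (p.1.1, p.2) * k (p.1.2, p.2))
      ((νB.prod νB).prod νC) :=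
    integrable_mul2 ((memLp_comp gf hk.aestronglyMeasurable hk4).mono_exponent
        (by norm_num))
      ((memLp_comp gs hk.aestronglyMeasurable hk4).mono_exponent (by norm_num))
  have hM_int : Integrable M (νB.prod νB) := hG2.integral_prod_left
  have hM2_int : Integrable (fun bb => M bb ^ 2) (νB.prod νB) :=
    hF4.integral_prod_left.congr (Filter.Eventually.of_forall fun bb => inner4 bb)
  have step3 : (∫ bb, M bb ∂(νB.prod νB)) ^ 2 ≤ ∫ bb, M bb ^ 2 ∂(νB.prod νB) :=
    sq_integral_le hM_int hM2_int
  have step4 : ∫ bb, M bb ∂(νB.prod νB) = ∫ c, ζ c ^ 2 ∂νC := by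
    calc ∫ bb, M bb ∂(νB.prod νB)
        = ∫ p : (B × B) × C, k (p.1.1, p.2) * k (p.1.2, p.2) ∂((νB.prod νB).prod νC) :=
          (integral_prod _ hG2).symm
      _ = ∫ c, ∫ bb : B × B, k (bb.1, c) * k (bb.2, c) ∂(νB.prod νB) ∂νC :=
          integral_prod_symm _ hG2
      _ = ∫ c, ζ c ^ 2 ∂νC := by
          refine integral_congr_ae (Filter.Eventually.of_forall fun c => ?_)
          show (∫ bb : B × B, k (bb.1, c) * k (bb.2, c) ∂(νB.prod νB)) = ζ c ^ 2
          rw [integral_prod_mul (fun b => k (b, c)) (fun b => k (b, c)), hζ]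
          ring
  have hζ_int : Integrable ζ νC := hkint.integral_prod_right
  have hζ2_int : Integrable (fun c => ζ c ^ 2) νC := by
    refine hG2.integral_prod_right.congr (Filter.Eventually.of_forall fun c => ?_)
    show (∫ bb : B × B, k (bb.1, c) * k (bb.2, c) ∂(νB.prod νB)) = ζ c ^ 2
    rw [integral_prod_mul (fun b => k (b, c)) (fun b => k (b, c)), hζ]
    ring
  have step5 : (∫ c, ζ c ∂νC) ^ 2 ≤ ∫ c, ζ c ^ 2 ∂νC := sq_integral_le hζ_int hζ2_int
  have step6 : ∫ c, ζ c ∂νC = ∫ p, k p ∂σ := (integral_prod_symm _ hkint).symm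
  calc (∫ p, k p ∂σ) ^ 4 = ((∫ p, k p ∂σ) ^ 2) ^ 2 := by ring
    _ ≤ (∫ c, ζ c ^ 2 ∂νC) ^ 2 := by
        refine pow_le_pow_left₀ (sq_nonneg _) ?_ 2
        rw [← step6]; exact step5
    _ = (∫ bb, M bb ∂(νB.prod νB)) ^ 2 := by rw [step4]
    _ ≤ ∫ bb, M bb ^ 2 ∂(νB.prod νB) := step3
    _ = _ := step1.symm

lemma core {A B C : Type*} [MeasurableSpace A] [MeasurableSpace B] [MeasurableSpace C]
    (νA : Measure A) (νB : Measure B) (νC : Measure C)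
    [IsProbabilityMeasure νA] [IsProbabilityMeasure νB] [IsProbabilityMeasure νC]
    (K : A × B × C → ℝ) (hK : Measurable K) (hK4 : MemLp K 4 (νA.prod (νB.prod νC))) :
    (∫ p : A × (B × B) × C × C, K (p.1, p.2.1.1, p.2.2.1) * K (p.1, p.2.1.2, p.2.2.2)
        ∂(νA.prod ((νB.prod νB).prod (νC.prod νC))))
      * (∫ p : A × (B × B) × C × C, K (p.1, p.2.1.2, p.2.2.1) * K (p.1, p.2.1.1, p.2.2.2)
        ∂(νA.prod ((νB.prod νB).prod (νC.prod νC))))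
    ≤ ∫ p : A × (B × B) × C × C,
        (K (p.1, p.2.1.1, p.2.2.1) * K (p.1, p.2.1.2, p.2.2.2))
          * (K (p.1, p.2.1.2, p.2.2.1) * K (p.1, p.2.1.1, p.2.2.2))
        ∂(νA.prod ((νB.prod νB).prod (νC.prod νC))) := by
  set σ := νB.prod νC with hσdef
  set τ := νA.prod σ with hτdef
  set Q := (νB.prod νB).prod (νC.prod νC) with hQdef
  set ρ := νA.prod Q with hρdef
  -- a.e. slices are in L⁴
  have hN : Integrable (fun z => K z ^ 4) τ := integrable_pow4_of_memLp4 hK4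
  have hka4 : ∀ᵐ a ∂νA, MemLp (fun p => K (a, p)) 4 σ := by
    filter_upwards [hN.prod_right_ae] with a ha
    exact memLp4_of_integrable_pow4 (hK.comp measurable_prodMk_left) ha
  set θ : A → ℝ := fun a => ∫ p, K (a, p) ∂σ with hθdef
  have hθm : StronglyMeasurable θ := hK.stronglyMeasurable.integral_prod_right'
  -- L⁴ components on ρ
  have e00 : MeasurePreserving
      (fun p : A × (B × B) × C × C => ((p.1, p.2.1.1, p.2.2.1) : A × B × C)) ρ τ :=
    (MeasurePreserving.id νA).prod (mp_fst.prod mp_fst)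
  have e11 : MeasurePreserving
      (fun p : A × (B × B) × C × C => ((p.1, p.2.1.2, p.2.2.2) : A × B × C)) ρ τ :=
    (MeasurePreserving.id νA).prod (mp_snd.prod mp_snd)
  have e10 : MeasurePreserving
      (fun p : A × (B × B) × C × C => ((p.1, p.2.1.2, p.2.2.1) : A × B × C)) ρ τ :=
    (MeasurePreserving.id νA).prod (mp_snd.prod mp_fst)
  have e01 : MeasurePreserving
      (fun p : A × (B × B) × C × C => ((p.1, p.2.1.1, p.2.2.2) : A × B × C)) ρ τ :=
    (MeasurePreserving.id νA).prod (mp_fst.prod mp_snd)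
  have K00 := memLp_comp e00 hK.aestronglyMeasurable hK4
  have K11 := memLp_comp e11 hK.aestronglyMeasurable hK4
  have K10 := memLp_comp e10 hK.aestronglyMeasurable hK4
  have K01 := memLp_comp e01 hK.aestronglyMeasurable hK4
  have hF4 : Integrable (fun p : A × (B × B) × C × C =>
      (K (p.1, p.2.1.1, p.2.2.1) * K (p.1, p.2.1.2, p.2.2.2))
        * (K (p.1, p.2.1.2, p.2.2.1) * K (p.1, p.2.1.1, p.2.2.2))) ρ :=
    integrable_mul2 (memLp_mul4 K00 K11) (memLp_mul4 K10 K01)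
  have hF2 : Integrable (fun p : A × (B × B) × C × C =>
      K (p.1, p.2.1.1, p.2.2.1) * K (p.1, p.2.1.2, p.2.2.2)) ρ :=
    integrable_mul2 (K00.mono_exponent (by norm_num))
      (K11.mono_exponent (by norm_num))
  have hF2' : Integrable (fun p : A × (B × B) × C × C =>
      K (p.1, p.2.1.2, p.2.2.1) * K (p.1, p.2.1.1, p.2.2.2)) ρ :=
    integrable_mul2 (K10.mono_exponent (by norm_num))
      (K01.mono_exponent (by norm_num))
  -- the F2 integral equals ∫ θ²
  have EF2 : (∫ p : A × (B × B) × C × C,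
      K (p.1, p.2.1.1, p.2.2.1) * K (p.1, p.2.1.2, p.2.2.2) ∂ρ) = ∫ a, θ a ^ 2 ∂νA := by
    rw [hρdef, integral_prod _ hF2]
    refine integral_congr_ae ?_
    filter_upwards [hka4] with a hka
    exact slice_F2 νB νC (fun p => K (a, p)) (hK.comp measurable_prodMk_left) hka
  -- the F2' integral equals the F2 integral (swap the two C-coordinates)
  have hS : MeasurePreserving
      (fun p : A × (B × B) × C × C => ((p.1, p.2.1, p.2.2.swap) : A × (B × B) × C × C)) ρ ρ :=
    (MeasurePreserving.id νA).prod
      ((MeasurePreserving.id (νB.prod νB)).prod Measure.measurePreserving_swap)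
  have EF2' : (∫ p : A × (B × B) × C × C,
      K (p.1, p.2.1.2, p.2.2.1) * K (p.1, p.2.1.1, p.2.2.2) ∂ρ)
      = ∫ p : A × (B × B) × C × C, K (p.1, p.2.1.1, p.2.2.1) * K (p.1, p.2.1.2, p.2.2.2) ∂ρ := by
    have h1 : (∫ p : A × (B × B) × C × C,
        K (p.1, p.2.1.2, p.2.2.1) * K (p.1, p.2.1.1, p.2.2.2) ∂ρ)
        = ∫ p : A × (B × B) × C × C,
          (fun r : A × (B × B) × C × C => K (r.1, r.2.1.1, r.2.2.1) * K (r.1, r.2.1.2, r.2.2.2))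
            ((p.1, p.2.1, p.2.2.swap)) ∂ρ := by
      refine integral_congr_ae (Filter.Eventually.of_forall fun p => ?_)
      show K (p.1, p.2.1.2, p.2.2.1) * K (p.1, p.2.1.1, p.2.2.2)
        = K (p.1, p.2.1.1, p.2.2.2) * K (p.1, p.2.1.2, p.2.2.1)
      ring
    rw [h1, integral_comp hS hF2.aestronglyMeasurable]
  -- integral of F4 dominates ∫ θ⁴
  have hbound : ∀ᵐ a ∂νA, θ a ^ 4 ≤ ∫ q, (K (a, q.1.1, q.2.1) * K (a, q.1.2, q.2.2))
      * (K (a, q.1.2, q.2.1) * K (a, q.1.1, q.2.2)) ∂Q := by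
    filter_upwards [hka4] with a hka
    exact slice_main νB νC (fun p => K (a, p)) (hK.comp measurable_prodMk_left) hka
  have hmargF4 : Integrable (fun a => ∫ q, (K (a, q.1.1, q.2.1) * K (a, q.1.2, q.2.2))
      * (K (a, q.1.2, q.2.1) * K (a, q.1.1, q.2.2)) ∂Q) νA := hF4.integral_prod_left
  -- integrability of θ², θ⁴
  have hD_int : Integrable (fun a => ∫ p, K (a, p) ^ 4 ∂σ) νA := hN.integral_prod_left
  have hθ4_le : ∀ᵐ a ∂νA, θ a ^ 4 ≤ ∫ p, K (a, p) ^ 4 ∂σ := by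
    filter_upwards [hka4] with a hka
    exact pow4_integral_le (hka.integrable (by norm_num)) (integrable_sq_of_memLp4 hka)
      (integrable_pow4_of_memLp4 hka)
  have hθ4_int : Integrable (fun a => θ a ^ 4) νA := by
    refine hD_int.mono' ((hθm.measurable.pow_const 4).aestronglyMeasurable) ?_
    filter_upwards [hθ4_le] with a ha
    rwa [Real.norm_eq_abs, abs_of_nonneg (by positivity)]
  have hθ2_int : Integrable (fun a => θ a ^ 2) νA := by
    refine ((integrable_const (1:ℝ)).add hθ4_int).mono'
      ((hθm.measurable.pow_const 2).aestronglyMeasurable) ?_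
    refine Filter.Eventually.of_forall fun a => ?_
    rw [Real.norm_eq_abs, abs_of_nonneg (by positivity)]
    show θ a ^ 2 ≤ 1 + θ a ^ 4
    nlinarith [sq_nonneg (θ a ^ 2 - 1)]
  have hA : ∫ a, θ a ^ 4 ∂νA ≤ ∫ p : A × (B × B) × C × C,
      (K (p.1, p.2.1.1, p.2.2.1) * K (p.1, p.2.1.2, p.2.2.2))
        * (K (p.1, p.2.1.2, p.2.2.1) * K (p.1, p.2.1.1, p.2.2.2)) ∂ρ := by
    rw [hρdef, integral_prod _ hF4]
    exact integral_mono_ae hθ4_int hmargF4 hbound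
  have hB : (∫ a, θ a ^ 2 ∂νA) ^ 2 ≤ ∫ a, θ a ^ 4 ∂νA := by
    have h := sq_integral_le hθ2_int
      (hθ4_int.congr (Filter.Eventually.of_forall fun a => by ring))
    calc (∫ a, θ a ^ 2 ∂νA) ^ 2 ≤ ∫ a, (θ a ^ 2) ^ 2 ∂νA := h
      _ = ∫ a, θ a ^ 4 ∂νA := integral_congr_ae (Filter.Eventually.of_forall fun a => by ring)
  rw [EF2', EF2]
  calc (∫ a, θ a ^ 2 ∂νA) * (∫ a, θ a ^ 2 ∂νA) = (∫ a, θ a ^ 2 ∂νA) ^ 2 := by ring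
    _ ≤ ∫ a, θ a ^ 4 ∂νA := hB
    _ ≤ _ := hA
end CovSymAux



/-- Nonnegativity of the covariance of the two terms of the symmetrized main-index estimator:
with `X₁, X₂, X₃` mutually independent, `g(X₁,X₂,X₃)` having finite fourth moment, and
`Y_i[j]` (for `i ∈ {1,2,3}`, `j ∈ {0,1}`) mutually independent with `Y_i[j] ~ X_i`, writing
`g[i][j][k] = g(Y₁[i], Y₂[j], Y₃[k])`, `B[i] = g[1-i][i][0] - g[i][i][0]`,
`C[i] = g[1-i][1-i][1] - g[i][1-i][1]` and `A[i] = B[i]·C[i]`, one has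
`Cov(A[0], A[1]) ≥ 0`. -/
theorem cov_symmetrized_terms_nonneg
    {Ω α β γ : Type*} [MeasurableSpace Ω]
    [MeasurableSpace α] [MeasurableSpace β] [MeasurableSpace γ]
    (μ : Measure Ω) [IsProbabilityMeasure μ]
    (X1 : Ω → α) (X2 : Ω → β) (X3 : Ω → γ)
    (hX1 : Measurable X1) (hX2 : Measurable X2) (hX3 : Measurable X3)
    (hX23 : IndepFun X2 X3 μ)
    (hX123 : IndepFun X1 (fun ω => (X2 ω, X3 ω)) μ)
    (g : α × β × γ → ℝ) (hg : Measurable g)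
    (hg4 : MemLp (fun ω => g (X1 ω, X2 ω, X3 ω)) 4 μ)
    (Y1 : Fin 2 → Ω → α) (Y2 : Fin 2 → Ω → β) (Y3 : Fin 2 → Ω → γ)
    (hY1 : ∀ j, Measurable (Y1 j)) (hY2 : ∀ j, Measurable (Y2 j))
    (hY3 : ∀ j, Measurable (Y3 j))
    (hY1id : ∀ j, IdentDistrib (Y1 j) X1 μ μ)
    (hY2id : ∀ j, IdentDistrib (Y2 j) X2 μ μ)
    (hY3id : ∀ j, IdentDistrib (Y3 j) X3 μ μ)
    (h1 : IndepFun (Y1 0) (Y1 1) μ)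
    (h2 : IndepFun (Y2 0) (Y2 1) μ)
    (h3 : IndepFun (Y3 0) (Y3 1) μ)
    (h23 : IndepFun (fun ω => (Y2 0 ω, Y2 1 ω)) (fun ω => (Y3 0 ω, Y3 1 ω)) μ)
    (h123 : IndepFun (fun ω => (Y1 0 ω, Y1 1 ω))
        (fun ω => ((Y2 0 ω, Y2 1 ω), (Y3 0 ω, Y3 1 ω))) μ) :
    (∫ ω,
        ((g (Y1 1 ω, Y2 0 ω, Y3 0 ω) - g (Y1 0 ω, Y2 0 ω, Y3 0 ω))
          * (g (Y1 1 ω, Y2 1 ω, Y3 1 ω) - g (Y1 0 ω, Y2 1 ω, Y3 1 ω)))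
        * ((g (Y1 0 ω, Y2 1 ω, Y3 0 ω) - g (Y1 1 ω, Y2 1 ω, Y3 0 ω))
          * (g (Y1 0 ω, Y2 0 ω, Y3 1 ω) - g (Y1 1 ω, Y2 0 ω, Y3 1 ω))) ∂μ)
      - (∫ ω, (g (Y1 1 ω, Y2 0 ω, Y3 0 ω) - g (Y1 0 ω, Y2 0 ω, Y3 0 ω))
          * (g (Y1 1 ω, Y2 1 ω, Y3 1 ω) - g (Y1 0 ω, Y2 1 ω, Y3 1 ω)) ∂μ)
        * (∫ ω, (g (Y1 0 ω, Y2 1 ω, Y3 0 ω) - g (Y1 1 ω, Y2 1 ω, Y3 0 ω))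
          * (g (Y1 0 ω, Y2 0 ω, Y3 1 ω) - g (Y1 1 ω, Y2 0 ω, Y3 1 ω)) ∂μ)
      ≥ 0 := by
  set ν1 := μ.map X1 with hν1
  set ν2 := μ.map X2 with hν2
  set ν3 := μ.map X3 with hν3
  haveI i1 : IsProbabilityMeasure ν1 := Measure.isProbabilityMeasure_map hX1.aemeasurable
  haveI i2 : IsProbabilityMeasure ν2 := Measure.isProbabilityMeasure_map hX2.aemeasurable
  haveI i3 : IsProbabilityMeasure ν3 := Measure.isProbabilityMeasure_map hX3.aemeasurable
  have m1 : μ.map (fun ω => (Y1 0 ω, Y1 1 ω)) = ν1.prod ν1 := by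
    rw [(indepFun_iff_map_prod_eq_prod_map_map (hY1 0).aemeasurable
      (hY1 1).aemeasurable).mp h1, (hY1id 0).map_eq, (hY1id 1).map_eq]
  have m2 : μ.map (fun ω => (Y2 0 ω, Y2 1 ω)) = ν2.prod ν2 := by
    rw [(indepFun_iff_map_prod_eq_prod_map_map (hY2 0).aemeasurable
      (hY2 1).aemeasurable).mp h2, (hY2id 0).map_eq, (hY2id 1).map_eq]
  have m3 : μ.map (fun ω => (Y3 0 ω, Y3 1 ω)) = ν3.prod ν3 := by
    rw [(indepFun_iff_map_prod_eq_prod_map_map (hY3 0).aemeasurable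
      (hY3 1).aemeasurable).mp h3, (hY3id 0).map_eq, (hY3id 1).map_eq]
  have m23 : μ.map (fun ω => ((Y2 0 ω, Y2 1 ω), (Y3 0 ω, Y3 1 ω)))
      = (ν2.prod ν2).prod (ν3.prod ν3) := by
    rw [(indepFun_iff_map_prod_eq_prod_map_map ((hY2 0).prodMk (hY2 1)).aemeasurable
      ((hY3 0).prodMk (hY3 1)).aemeasurable).mp h23, m2, m3]
  have mW : μ.map (fun ω => ((Y1 0 ω, Y1 1 ω), ((Y2 0 ω, Y2 1 ω), (Y3 0 ω, Y3 1 ω))))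
      = (ν1.prod ν1).prod ((ν2.prod ν2).prod (ν3.prod ν3)) := by
    rw [(indepFun_iff_map_prod_eq_prod_map_map ((hY1 0).prodMk (hY1 1)).aemeasurable
      (((hY2 0).prodMk (hY2 1)).prodMk ((hY3 0).prodMk (hY3 1))).aemeasurable).mp h123,
      m1, m23]
  have mX : μ.map (fun ω => (X1 ω, (X2 ω, X3 ω))) = ν1.prod (ν2.prod ν3) := by
    rw [(indepFun_iff_map_prod_eq_prod_map_map hX1.aemeasurable
      (hX2.prodMk hX3).aemeasurable).mp hX123,
      (indepFun_iff_map_prod_eq_prod_map_map hX2.aemeasurable hX3.aemeasurable).mp hX23]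
  set K : (α × α) × β × γ → ℝ := fun p => g (p.1.2, p.2) - g (p.1.1, p.2) with hKdef
  have hKm : Measurable K :=
    (hg.comp (measurable_fst.snd.prodMk measurable_snd)).sub
      (hg.comp (measurable_fst.fst.prodMk measurable_snd))
  have hgL4 : MemLp g 4 (ν1.prod (ν2.prod ν3)) := by
    rw [← mX]
    exact (memLp_map_measure_iff hg.aestronglyMeasurable
      (hX1.prodMk (hX2.prodMk hX3)).aemeasurable).mpr hg4
  have pf1 : MeasurePreserving (fun p : (α × α) × β × γ => ((p.1.2, p.2) : α × β × γ))
      ((ν1.prod ν1).prod (ν2.prod ν3)) (ν1.prod (ν2.prod ν3)) :=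
    CovSymAux.mp_snd.prod (MeasurePreserving.id _)
  have pf0 : MeasurePreserving (fun p : (α × α) × β × γ => ((p.1.1, p.2) : α × β × γ))
      ((ν1.prod ν1).prod (ν2.prod ν3)) (ν1.prod (ν2.prod ν3)) :=
    CovSymAux.mp_fst.prod (MeasurePreserving.id _)
  have hK4 : MemLp K 4 ((ν1.prod ν1).prod (ν2.prod ν3)) :=
    (CovSymAux.memLp_comp pf1 hg.aestronglyMeasurable hgL4).sub
      (CovSymAux.memLp_comp pf0 hg.aestronglyMeasurable hgL4)
  have hcore := CovSymAux.core (ν1.prod ν1) ν2 ν3 K hKm hK4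
  set W : Ω → (α × α) × (β × β) × γ × γ :=
    fun ω => ((Y1 0 ω, Y1 1 ω), ((Y2 0 ω, Y2 1 ω), (Y3 0 ω, Y3 1 ω))) with hWdef
  have hWm : Measurable W :=
    ((hY1 0).prodMk (hY1 1)).prodMk
      (((hY2 0).prodMk (hY2 1)).prodMk ((hY3 0).prodMk (hY3 1)))
  have trans : ∀ F : (α × α) × (β × β) × γ × γ → ℝ, Measurable F →
      ∫ p, F p ∂((ν1.prod ν1).prod ((ν2.prod ν2).prod (ν3.prod ν3))) = ∫ ω, F (W ω) ∂μ :=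
    fun F hF => by rw [← mW, integral_map hWm.aemeasurable hF.aestronglyMeasurable]
  have mk00 : Measurable fun p : (α × α) × (β × β) × γ × γ => K (p.1, p.2.1.1, p.2.2.1) :=
    hKm.comp (measurable_fst.prodMk (measurable_snd.fst.fst.prodMk measurable_snd.snd.fst))
  have mk11 : Measurable fun p : (α × α) × (β × β) × γ × γ => K (p.1, p.2.1.2, p.2.2.2) :=
    hKm.comp (measurable_fst.prodMk (measurable_snd.fst.snd.prodMk measurable_snd.snd.snd))
  have mk10 : Measurable fun p : (α × α) × (β × β) × γ × γ => K (p.1, p.2.1.2, p.2.2.1) :=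
    hKm.comp (measurable_fst.prodMk (measurable_snd.fst.snd.prodMk measurable_snd.snd.fst))
  have mk01 : Measurable fun p : (α × α) × (β × β) × γ × γ => K (p.1, p.2.1.1, p.2.2.2) :=
    hKm.comp (measurable_fst.prodMk (measurable_snd.fst.fst.prodMk measurable_snd.snd.snd))
  have h4 : (∫ p : (α × α) × (β × β) × γ × γ,
        (K (p.1, p.2.1.1, p.2.2.1) * K (p.1, p.2.1.2, p.2.2.2))
          * (K (p.1, p.2.1.2, p.2.2.1) * K (p.1, p.2.1.1, p.2.2.2))
        ∂((ν1.prod ν1).prod ((ν2.prod ν2).prod (ν3.prod ν3))))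
      = ∫ ω,
        ((g (Y1 1 ω, Y2 0 ω, Y3 0 ω) - g (Y1 0 ω, Y2 0 ω, Y3 0 ω))
          * (g (Y1 1 ω, Y2 1 ω, Y3 1 ω) - g (Y1 0 ω, Y2 1 ω, Y3 1 ω)))
        * ((g (Y1 0 ω, Y2 1 ω, Y3 0 ω) - g (Y1 1 ω, Y2 1 ω, Y3 0 ω))
          * (g (Y1 0 ω, Y2 0 ω, Y3 1 ω) - g (Y1 1 ω, Y2 0 ω, Y3 1 ω))) ∂μ := by
    rw [trans _ ((mk00.fun_mul mk11).fun_mul (mk10.fun_mul mk01))]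
    refine integral_congr_ae (Filter.Eventually.of_forall fun ω => ?_)
    simp only [hKdef, hWdef]
    ring
  have h2a : (∫ p : (α × α) × (β × β) × γ × γ,
        K (p.1, p.2.1.1, p.2.2.1) * K (p.1, p.2.1.2, p.2.2.2)
        ∂((ν1.prod ν1).prod ((ν2.prod ν2).prod (ν3.prod ν3))))
      = ∫ ω, (g (Y1 1 ω, Y2 0 ω, Y3 0 ω) - g (Y1 0 ω, Y2 0 ω, Y3 0 ω))
          * (g (Y1 1 ω, Y2 1 ω, Y3 1 ω) - g (Y1 0 ω, Y2 1 ω, Y3 1 ω)) ∂μ := by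
    rw [trans _ (mk00.fun_mul mk11)]
  have h2b : (∫ p : (α × α) × (β × β) × γ × γ,
        K (p.1, p.2.1.2, p.2.2.1) * K (p.1, p.2.1.1, p.2.2.2)
        ∂((ν1.prod ν1).prod ((ν2.prod ν2).prod (ν3.prod ν3))))
      = ∫ ω, (g (Y1 0 ω, Y2 1 ω, Y3 0 ω) - g (Y1 1 ω, Y2 1 ω, Y3 0 ω))
          * (g (Y1 0 ω, Y2 0 ω, Y3 1 ω) - g (Y1 1 ω, Y2 0 ω, Y3 1 ω)) ∂μ := by
    rw [trans _ (mk10.fun_mul mk01)]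
    refine integral_congr_ae (Filter.Eventually.of_forall fun ω => ?_)
    simp only [hKdef, hWdef]
    ring
  rw [← h4, ← h2a, ← h2b]
  exact sub_nonneg.mpr hcore
end
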